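/- arXiv:1904.09418 — 13 statements merged into one kernel-verified Lean document; each statement's English description precedes it below -/
import Mathlib

section
/- Let α be an algebraic integer with minimal polynomial p(x) = x^n + a_1 x^{n-1} + ... + a_n over ℚ. If for every i = 1,...,n the integer (a_i)^n is divisible by (a_n)^i, then for every Galois conjugate τ(α) of α, the quotient α/τ(α) is an algebraic integer. -/
open scoped Multiplicative WithZero
open Polynomial IsDedekindDomain NumberField

namespace OstrikAux



lemma sup_mem_of_ne_zero {s : Multiset ℤᵐ⁰} (h : s ≠ 0) : s.sup ∈ s := by
  induction s using Multiset.induction_on with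
  | empty => exact absurd rfl h
  | cons a t ih =>
    rcases eq_or_ne t 0 with rfl | ht
    · simp
    · rw [Multiset.sup_cons]
      rcases le_total a t.sup with hle | hle
      · rw [sup_eq_right.mpr hle]; exact Multiset.mem_cons_of_mem (ih ht)
      · rw [sup_eq_left.mpr hle]; exact Multiset.mem_cons_self _ _

variable {K : Type*} [Field K] (w : Valuation K ℤᵐ⁰)

lemma val_sum_lt {s : Multiset K} {B : ℤᵐ⁰} (hB : B ≠ 0)
    (h : ∀ x ∈ s, w x < B) : w s.sum < B := by
  induction s using Multiset.induction_on with
  | empty => simpa using zero_lt_iff.mpr hB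
  | cons a t ih =>
    rw [Multiset.sum_cons]
    exact lt_of_le_of_lt (w.map_add _ _)
      (max_lt (h a (Multiset.mem_cons_self a t))
        (ih fun x hx => h x (Multiset.mem_cons_of_mem hx)))

lemma val_prod_le {s : Multiset K} {M : ℤᵐ⁰} (h : ∀ x ∈ s, w x ≤ M) :
    w s.prod ≤ M ^ Multiset.card s := by
  rw [map_multiset_prod]
  have := Multiset.prod_le_pow_card (s.map w) M (by
    intro x hx; obtain ⟨y, hy, rfl⟩ := Multiset.mem_map.mp hx; exact h y hy)
  simpa using this

lemma val_prod_lt {s : Multiset K} {M : ℤᵐ⁰} (hM : M ≠ 0) (h : ∀ x ∈ s, w x ≤ M)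
    {x₀ : K} (hx₀ : x₀ ∈ s) (hlt : w x₀ < M) : w s.prod < M ^ Multiset.card s := by
  obtain ⟨t, rfl⟩ := Multiset.exists_cons_of_mem hx₀
  rw [Multiset.prod_cons, Multiset.card_cons, map_mul, pow_succ']
  have ht : w t.prod ≤ M ^ Multiset.card t :=
    val_prod_le w fun x hx => h x (Multiset.mem_cons_of_mem hx)
  calc w x₀ * w t.prod ≤ w x₀ * M ^ Multiset.card t := by
        exact mul_le_mul_right ht _
    _ < M * M ^ Multiset.card t := by
        rw [mul_comm (w x₀), mul_comm M]
        exact mul_lt_mul_of_pos_left hlt (zero_lt_iff.mpr (pow_ne_zero _ hM))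
  

lemma newton {s : Multiset K} (hnd : s.Nodup) (hne : s ≠ 0)
    (h0 : ∀ x ∈ s, w x ≠ 0)
    (hdvd : ∀ k : ℕ, 1 ≤ k → k ≤ Multiset.card s →
      (w (s.esymm k)) ^ Multiset.card s ≤ (w s.prod) ^ k) :
    ∀ x ∈ s, ∀ y ∈ s, w x = w y := by
  classical
  set n := Multiset.card s with hn
  set M := (s.map w).sup with hM
  have hMmem : M ∈ s.map w := sup_mem_of_ne_zero (by simpa using hne)
  obtain ⟨r₀, hr₀s, hr₀⟩ := Multiset.mem_map.mp hMmem
  have hM0 : M ≠ 0 := hr₀ ▸ h0 r₀ hr₀s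
  have hle : ∀ x ∈ s, w x ≤ M := fun x hx => Multiset.le_sup (Multiset.mem_map_of_mem w hx)
  set S := s.filter (fun r => w r = M) with hSdef
  set k := Multiset.card S with hk
  have hSle : S ≤ s := Multiset.filter_le _ s
  have hk1 : 1 ≤ k := by
    have h1 : r₀ ∈ S := Multiset.mem_filter.mpr ⟨hr₀s, hr₀⟩
    exact Multiset.card_pos.mpr fun h => by simp [h] at h1
  have hkn : k ≤ n := Multiset.card_le_card hSle
  have hSmem : S ∈ s.powersetCard k := Multiset.mem_powersetCard.mpr ⟨hSle, rfl⟩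
  have hSprod : w S.prod = M ^ k := by
    rw [map_multiset_prod]
    have hrepl : S.map w = Multiset.replicate k M := Multiset.eq_replicate.mpr
      ⟨by simp [hk], fun b hb => by
        obtain ⟨y, hy, rfl⟩ := Multiset.mem_map.mp hb
        exact (Multiset.mem_filter.mp hy).2⟩
    rw [hrepl, Multiset.prod_replicate]
  have hMk0 : M ^ k ≠ 0 := pow_ne_zero _ hM0
  have hA : w (s.esymm k) = M ^ k := by
    have hcons := Multiset.cons_erase hSmem
    have hrest : ∀ t ∈ (s.powersetCard k).erase S, w t.prod < M ^ k := by
      intro t ht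
      have htmem : t ∈ s.powersetCard k := Multiset.mem_of_mem_erase ht
      obtain ⟨hts, htc⟩ := Multiset.mem_powersetCard.mp htmem
      have htne : t ≠ S := by
        rintro rfl
        exact (hnd.powersetCard.notMem_erase) ht
      have hex : ∃ x ∈ t, w x ≠ M := by
        by_contra hall
        push_neg at hall
        have hle' : t ≤ S := Multiset.le_filter.mpr ⟨hts, hall⟩
        exact htne (Multiset.eq_of_le_of_card_le hle' (by rw [htc]))
      obtain ⟨x₀, hx₀t, hx₀⟩ := hex
      have := val_prod_lt w hM0 (fun x hx => hle x (Multiset.mem_of_le hts hx)) hx₀t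
        (lt_of_le_of_ne (hle x₀ (Multiset.mem_of_le hts hx₀t)) hx₀)
      rwa [htc] at this
    have hsum : w ((((s.powersetCard k).erase S).map Multiset.prod).sum) < M ^ k := by
      apply val_sum_lt w hMk0
      intro x hx
      obtain ⟨t, ht, rfl⟩ := Multiset.mem_map.mp hx
      exact hrest t ht
    have hsplit : s.esymm k = S.prod + (((s.powersetCard k).erase S).map Multiset.prod).sum := by
      rw [Multiset.esymm]
      conv_lhs => rw [← hcons]
      rw [Multiset.map_cons, Multiset.sum_cons]
    rw [hsplit, Valuation.map_add_eq_of_lt_left _ (by rw [hSprod]; exact hsum), hSprod]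
  have hB : w s.prod ≤ M ^ n := val_prod_le w hle
  have key := hdvd k hk1 hkn
  rw [hA, ← pow_mul] at key
  have heq : w s.prod = M ^ n := by
    rcases lt_or_eq_of_le hB with hlt' | heq'
    · exfalso
      have hk0 : k ≠ 0 := by omega
      have h2 : (w s.prod) ^ k < (M ^ n) ^ k := pow_lt_pow_left₀ hlt' zero_le' hk0
      rw [← pow_mul, mul_comm n k] at h2
      exact absurd (lt_of_le_of_lt key h2) (lt_irrefl _)
    · exact heq'
  have hall : ∀ x ∈ s, w x = M := by
    intro x hx
    by_contra hxe
    have := val_prod_lt w hM0 hle hx (lt_of_le_of_ne (hle x hx) hxe)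
    rw [heq] at this
    exact lt_irrefl _ this
  intro x hx y hy
  rw [hall x hx, hall y hy]



end OstrikAux

set_option maxHeartbeats 2000000 in
open IsDedekindDomain.HeightOneSpectrum in
/-- Ostrik's Lemma 2.7, (v) ⟹ (ii): if the minimal polynomial of an algebraic
integer α satisfies the divisibility condition `(a_n)^i ∣ (a_i)^n`, then α divided
by any of its Galois conjugates is an algebraic integer. -/
theorem stmt_0 (α : ℂ) (hα : IsIntegral ℤ α)
    (h : ∀ i : ℕ, 1 ≤ i → i ≤ (minpoly ℤ α).natDegree →
      ((minpoly ℤ α).coeff 0) ^ i ∣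
        ((minpoly ℤ α).coeff ((minpoly ℤ α).natDegree - i)) ^ (minpoly ℤ α).natDegree) :
    ∀ β : ℂ, Polynomial.aeval β (minpoly ℤ α) = 0 → IsIntegral ℤ (α / β) := by
  intro β hβroot
  by_cases hβ0 : β = 0
  · rw [hβ0, div_zero]; exact isIntegral_zero
  classical
  set P : Polynomial ℤ := minpoly ℤ α with hPdef
  have hPmonic : P.Monic := minpoly.monic hα
  have hPirr : Irreducible P := minpoly.irreducible hα
  set n : ℕ := P.natDegree with hndef
  have hn1 : 1 ≤ n := minpoly.natDegree_pos hα
  have hαQ : IsIntegral ℚ α := hα.tower_top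
  set pQ : Polynomial ℚ := P.map (algebraMap ℤ ℚ) with hpQdef
  have hpQ : pQ = minpoly ℚ α := (minpoly.isIntegrallyClosed_eq_field_fractions' ℚ hα).symm
  have hpQmonic : pQ.Monic := hPmonic.map _
  have hpQsep : pQ.Separable := (hpQ ▸ minpoly.irreducible hαQ).separable
  have hpQdeg : pQ.natDegree = n := hPmonic.natDegree_map _
  have hsplC : (pQ.map (algebraMap ℚ ℂ)).Splits := IsAlgClosed.splits _
  set L : IntermediateField ℚ ℂ := IntermediateField.adjoin ℚ (pQ.rootSet ℂ) with hLdef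
  haveI hsf : pQ.IsSplittingField ℚ L := IntermediateField.adjoin_rootSet_isSplittingField hsplC
  haveI : FiniteDimensional ℚ L := Polynomial.IsSplittingField.finiteDimensional L pQ
  haveI : NumberField L := ⟨⟩
  have hαmem : α ∈ pQ.rootSet ℂ := by
    rw [Polynomial.mem_rootSet]
    exact ⟨hpQmonic.ne_zero, by rw [hpQdef, aeval_map_algebraMap]; exact minpoly.aeval ℤ α⟩
  have hβmem : β ∈ pQ.rootSet ℂ := by
    rw [Polynomial.mem_rootSet]
    exact ⟨hpQmonic.ne_zero, by rw [hpQdef, aeval_map_algebraMap]; exact hβroot⟩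
  set α' : L := ⟨α, IntermediateField.subset_adjoin ℚ _ hαmem⟩ with hα'def
  set β' : L := ⟨β, IntermediateField.subset_adjoin ℚ _ hβmem⟩ with hβ'def
  set pL : Polynomial L := pQ.map (algebraMap ℚ L) with hpLdef
  have hpLP : pL = P.map (algebraMap ℤ L) := by
    rw [hpLdef, hpQdef, Polynomial.map_map]
    congr 1
  have hpLmonic : pL.Monic := hpQmonic.map _
  have hsplit : pL.Splits := hsf.splits
  set s : Multiset L := pL.roots with hsdef
  have hcard : Multiset.card s = n := by
    have hcr := (splits_iff_card_roots).mp hsplit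
    rw [hsdef, hcr, hpLdef, hpQmonic.natDegree_map, hpQdeg]
  have hfact : pL = (s.map fun r => X - C r).prod :=
    hsplit.eq_prod_roots_of_monic hpLmonic
  have hnd : s.Nodup := Polynomial.nodup_roots (Separable.map hpQsep)
  have hcoeff : ∀ j, pL.coeff j = ((P.coeff j : ℤ) : L) := by
    intro j
    rw [hpLP, Polynomial.coeff_map]
    exact eq_intCast ((algebraMap ℤ L)) _
  have hc0 : P.coeff 0 ≠ 0 := by
    intro hc
    obtain ⟨q, hq⟩ := Polynomial.X_dvd_iff.mpr hc
    rcases hPirr.isUnit_or_isUnit hq with hu | hu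
    · exact Polynomial.not_isUnit_X hu
    · obtain ⟨r, hr, hrq⟩ := Polynomial.isUnit_iff.mp hu
      have hβr := hβroot
      rw [hq, ← hrq, map_mul, Polynomial.aeval_X, Polynomial.aeval_C] at hβr
      have hr0 : (algebraMap ℤ ℂ r) ≠ 0 := by
        simpa using hr.ne_zero
      exact hβ0 ((mul_eq_zero.mp hβr).resolve_right hr0)
  have hroots0 : ∀ r ∈ s, r ≠ 0 := by
    intro r hrs hr0
    have heval : pL.eval r = 0 := (Polynomial.mem_roots'.mp hrs).2
    rw [hr0, ← Polynomial.coeff_zero_eq_eval_zero, hcoeff 0] at heval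
    exact hc0 (by exact_mod_cast heval)
  have hmem' : ∀ z : L, Polynomial.aeval (algebraMap L ℂ z) pQ = 0 → z ∈ s := by
    intro z hz
    rw [hsdef, Polynomial.mem_roots']
    refine ⟨hpLmonic.ne_zero, ?_⟩
    have h2 : algebraMap L ℂ (Polynomial.aeval z pQ) = 0 := by
      rw [← Polynomial.aeval_algebraMap_apply]; exact hz
    have h1 : Polynomial.aeval z pQ = 0 :=
      (map_eq_zero_iff _ (algebraMap L ℂ).injective).mp h2
    rw [hpLdef, Polynomial.IsRoot, Polynomial.eval_map, ← Polynomial.aeval_def]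
    exact h1
  have hαs : α' ∈ s := hmem' α' (by
    rw [show algebraMap L ℂ α' = α from rfl, hpQdef, aeval_map_algebraMap]
    exact minpoly.aeval ℤ α)
  have hβs : β' ∈ s := hmem' β' (by
    rw [show algebraMap L ℂ β' = β from rfl, hpQdef, aeval_map_algebraMap]
    exact hβroot)
  have hs0 : s ≠ 0 := by
    intro h0'
    rw [h0'] at hαs
    exact absurd hαs (Multiset.notMem_zero _)
  have hint : ∀ r ∈ s, IsIntegral ℤ r := by
    intro r hrs
    refine ⟨P, hPmonic, ?_⟩
    have hroot : Polynomial.IsRoot pL r := (Polynomial.mem_roots'.mp hrs).2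
    rwa [hpLP, Polynomial.IsRoot, Polynomial.eval_map, ← Polynomial.aeval_def] at hroot
  -- the key valuation-theoretic claim
  have hkeyv : ∀ v : HeightOneSpectrum (𝓞 L), ∀ x ∈ s, ∀ y ∈ s,
      v.valuation L x = v.valuation L y := by
    intro v
    apply OstrikAux.newton (v.valuation L) hnd hs0
    · intro x hx; exact (Valuation.ne_zero_iff _).mpr (hroots0 x hx)
    · intro k hk1 hkcard
      rw [hcard] at hkcard
      obtain ⟨d, hd⟩ := h k hk1 hkcard
      have hvieta := Multiset.prod_X_sub_C_coeff s
        (show n - k ≤ Multiset.card s by rw [hcard]; omega)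
      rw [← hfact, hcard, Nat.sub_sub_self hkcard] at hvieta
      -- hvieta : pL.coeff (n - k) = (-1)^k * s.esymm k
      have hneg1 : v.valuation L ((-1 : L) ^ k) = 1 := by
        rw [map_pow]
        have : v.valuation L (-1 : L) = 1 := by
          have := (v.valuation L).map_neg (1 : L)
          rwa [Valuation.map_one] at this
        rw [this, one_pow]
      have hesymm : v.valuation L (s.esymm k) = v.valuation L (pL.coeff (n - k)) := by
        rw [hvieta, map_mul, hneg1, one_mul]
      have hc0val : v.valuation L (pL.coeff 0) = v.valuation L s.prod := by
        have h1 : pL.coeff 0 = (s.map fun r => -r).prod := by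
          rw [Polynomial.coeff_zero_eq_eval_zero, hfact, Polynomial.eval_multiset_prod,
            Multiset.map_map]
          congr 1
          apply Multiset.map_congr rfl
          intro x hx
          simp
        rw [h1, map_multiset_prod, map_multiset_prod, Multiset.map_map]
        congr 1
        apply Multiset.map_congr rfl
        intro x hx
        simp [Valuation.map_neg]
      have hdval : v.valuation L (((d : ℤ) : L)) ≤ 1 := by
        have hcast : ((d : ℤ) : L) = algebraMap (𝓞 L) L ((d : ℤ) : 𝓞 L) :=
          (map_intCast _ d).symm
        rw [hcast, valuation_of_algebraMap]
        exact v.intValuation_le_one _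
      have hdL : ((P.coeff (n - k) : ℤ) : L) ^ n = ((P.coeff 0 : ℤ) : L) ^ k * ((d : ℤ) : L) := by
        exact_mod_cast congrArg (fun z : ℤ => (z : L)) hd
      have hmain : v.valuation L (s.esymm k) ^ n ≤ v.valuation L s.prod ^ k := by
        rw [hesymm, hcoeff (n - k)]
        calc v.valuation L ((P.coeff (n - k) : ℤ) : L) ^ n
            = v.valuation L (((P.coeff (n - k) : ℤ) : L) ^ n) := (map_pow _ _ _).symm
          _ = v.valuation L (((P.coeff 0 : ℤ) : L) ^ k * ((d : ℤ) : L)) := by rw [hdL]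
          _ = v.valuation L (((P.coeff 0 : ℤ) : L)) ^ k * v.valuation L (((d : ℤ) : L)) := by
              rw [map_mul, map_pow]
          _ ≤ v.valuation L (((P.coeff 0 : ℤ) : L)) ^ k * 1 := by
              exact mul_le_mul_right hdval _
          _ = v.valuation L (pL.coeff 0) ^ k := by rw [mul_one, hcoeff 0]
          _ = v.valuation L s.prod ^ k := by rw [hc0val]
      rw [hcard]
      exact hmain
  -- pass to the ring of integers
  set a : 𝓞 L := ⟨α', hint α' hαs⟩ with hadef
  set b : 𝓞 L := ⟨β', hint β' hβs⟩ with hbdef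
  have ha0 : a ≠ 0 := by
    intro hh
    apply hroots0 α' hαs
    have h2 : (a : L) = ((0 : 𝓞 L) : L) := by rw [hh]
    exact h2
  have hb0 : b ≠ 0 := by
    intro hh
    apply hroots0 β' hβs
    have h2 : (b : L) = ((0 : 𝓞 L) : L) := by rw [hh]
    exact h2
  have hab : ∀ v : HeightOneSpectrum (𝓞 L), v.intValuation a = v.intValuation b := by
    intro v
    have h1 := hkeyv v α' hαs β' hβs
    rwa [show (α' : L) = algebraMap (𝓞 L) L a from rfl,
      show (β' : L) = algebraMap (𝓞 L) L b from rfl,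
      valuation_of_algebraMap, valuation_of_algebraMap] at h1
  have hspan : Ideal.span {a} = Ideal.span {b} := by
    have hma : Associates.mk (Ideal.span {a} : Ideal (𝓞 L)) ≠ 0 := by
      rw [Associates.mk_ne_zero, Ne, Ideal.zero_eq_bot, Ideal.span_singleton_eq_bot]
      exact ha0
    have hmb : Associates.mk (Ideal.span {b} : Ideal (𝓞 L)) ≠ 0 := by
      rw [Associates.mk_ne_zero, Ne, Ideal.zero_eq_bot, Ideal.span_singleton_eq_bot]
      exact hb0
    have heqmk := Associates.eq_of_eq_counts hma hmb ?_
    · exact associated_iff_eq.mp (Associates.mk_eq_mk_iff_associated.mp heqmk)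
    intro p hp
    obtain ⟨I, rfl⟩ := Associates.mk_surjective p
    have hIirr : Irreducible I := Associates.irreducible_mk.mp hp
    have hIprime : Prime I := UniqueFactorizationMonoid.irreducible_iff_prime.mp hIirr
    let v : HeightOneSpectrum (𝓞 L) :=
      ⟨I, Ideal.isPrime_of_prime hIprime, by
        rw [← Ideal.zero_eq_bot]; exact hIprime.ne_zero⟩
    have h1 := hab v
    rw [intValuation_apply, intValuation_apply, v.intValuationDef_if_neg ha0,
      v.intValuationDef_if_neg hb0] at h1
    have h2 := WithZero.coe_inj.mp h1
    have h3 := Multiplicative.ofAdd.injective h2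
    exact_mod_cast neg_inj.mp h3
  have hdvdba : b ∣ a := Ideal.span_singleton_le_span_singleton.mp (le_of_eq hspan)
  obtain ⟨c, hc⟩ := hdvdba
  have hcL := congrArg (algebraMap (𝓞 L) L) hc
  rw [map_mul] at hcL
  have hcC := congrArg (algebraMap L ℂ) hcL
  rw [map_mul] at hcC
  have hαβ : α = β * algebraMap L ℂ (algebraMap (𝓞 L) L c) := hcC
  rw [hαβ, mul_comm, mul_div_assoc, div_self hβ0, mul_one]
  exact (NumberField.RingOfIntegers.isIntegral_coe c).map ((algebraMap L ℂ).toIntAlgHom)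
end

section
/- Let K be an algebraic number field and let α ∈ K be a nonzero algebraic integer such that α/τ(α) is an algebraic integer for every τ ∈ Gal(K/ℚ) (where K/ℚ is Galois). Then there exists a positive integer ℓ dividing [K:ℚ] such that α^ℓ = n·u for some integer n and some unit u in the ring of integers of K. -/
/-- If α is a nonzero algebraic integer in a Galois number field K such that
α/τ(α) is an algebraic integer for every τ ∈ Gal(K/ℚ), then some power
α^ℓ with ℓ ∣ [K:ℚ] is an integer multiple of a unit of the ring of integers. -/
theorem stmt_1 (K : Type*) [Field K] [NumberField K] [IsGalois ℚ K]
    (α : K) (hα : IsIntegral ℤ α) (hα0 : α ≠ 0)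
    (h : ∀ τ : K ≃ₐ[ℚ] K, IsIntegral ℤ (α / τ α)) :
    ∃ ℓ : ℕ, 0 < ℓ ∧ ℓ ∣ Module.finrank ℚ K ∧
      ∃ (n : ℤ) (u : (NumberField.RingOfIntegers K)ˣ),
        α ^ ℓ = (n : K) *
          algebraMap (NumberField.RingOfIntegers K) K (u : NumberField.RingOfIntegers K) := by
  set d := Module.finrank ℚ K with hd
  have hcard : Fintype.card (K ≃ₐ[ℚ] K) = d := by
    rw [← Nat.card_eq_fintype_card]; exact IsGalois.card_aut_eq_finrank ℚ K
  have hnormint : IsIntegral ℤ (Algebra.norm ℚ α) := Algebra.isIntegral_norm ℚ hα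
  obtain ⟨n, hn⟩ := IsIntegrallyClosed.isIntegral_iff.mp hnormint
  have hnK : algebraMap ℚ K (Algebra.norm ℚ α) = ∏ σ : K ≃ₐ[ℚ] K, σ α :=
    Algebra.norm_eq_prod_automorphisms ℚ α
  have hnorm0 : Algebra.norm ℚ α ≠ 0 := (Algebra.norm_ne_zero_iff).mpr hα0
  have hnQ : (n : ℚ) = Algebra.norm ℚ α := by
    rw [← hn]; simp
  have hn0 : (n : K) ≠ 0 := by
    intro hc
    apply hnorm0
    have : (n : ℚ) = 0 := by
      exact_mod_cast (by exact_mod_cast hc : ((n : ℚ) : K) = 0)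
    rwa [hnQ] at this
  have hnKcast : ((n : ℚ) : K) = (n : K) := by push_cast; ring
  have hprod : (∏ σ : K ≃ₐ[ℚ] K, σ α) = (n : K) := by
    rw [← hnK, ← hnQ, hnKcast.symm]
    simp [map_ratCast]
  -- α^d / n is integral
  have h1 : IsIntegral ℤ (α ^ d / (n : K)) := by
    have : (∏ σ : K ≃ₐ[ℚ] K, (α / σ α)) = α ^ d / (n : K) := by
      rw [Finset.prod_div_distrib, Finset.prod_const, hprod, Finset.card_univ, hcard]
    rw [← this]
    exact IsIntegral.prod _ fun σ _ => h σ
  -- n / α^d is integral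
  have h2 : IsIntegral ℤ ((n : K) / α ^ d) := by
    have key : ∀ σ : K ≃ₐ[ℚ] K, IsIntegral ℤ (σ α / α) := by
      intro σ
      have hs := (h σ.symm).map (AlgHom.restrictScalars ℤ σ.toAlgHom)
      simpa [map_div₀] using hs
    have : (∏ σ : K ≃ₐ[ℚ] K, (σ α / α)) = (n : K) / α ^ d := by
      rw [Finset.prod_div_distrib, Finset.prod_const, hprod, Finset.card_univ, hcard]
    rw [← this]
    exact IsIntegral.prod _ fun σ _ => key σ
  have hmul : (α ^ d / (n : K)) * ((n : K) / α ^ d) = 1 := by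
    field_simp
  refine ⟨d, Module.finrank_pos, dvd_refl d, n,
    ⟨⟨_, h1⟩, ⟨_, h2⟩, ?_, ?_⟩, ?_⟩
  · exact Subtype.ext hmul
  · exact Subtype.ext (by rw [mul_comm] at hmul; exact hmul)
  · show α ^ d = (n : K) * (α ^ d / (n : K))
    field_simp
end

section
/- Let N ≥ 2 be a square-free integer and let α = a + b√N with a, b ∈ (1/2)ℤ be an algebraic integer in ℚ(√N). If 4a²/(a² − N b²) is an integer, then α is a d-number (i.e., α/σ(α) is an algebraic integer where σ(√N) = −√N), and conversely. -/
open Polynomial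

/-- Lemma 3.3 (i) ⟺ (iv): an algebraic integer α = a + b√N in ℚ(√N)
(a, b half-integers, N ≥ 2 square-free) is a d-number iff
4a²/(a² − Nb²) is an integer. -/
theorem stmt_2 (N : ℕ) (hN : 2 ≤ N) (hsf : Squarefree N) (a b : ℚ)
    (ha : ∃ z : ℤ, a = z / 2) (hb : ∃ z : ℤ, b = z / 2)
    (hint : IsIntegral ℤ ((a : ℝ) + (b : ℝ) * Real.sqrt N)) :
    IsIntegral ℤ (((a : ℝ) + (b : ℝ) * Real.sqrt N) /
        ((a : ℝ) - (b : ℝ) * Real.sqrt N)) ↔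
      ∃ z : ℤ, 4 * a ^ 2 = (z : ℚ) * (a ^ 2 - N * b ^ 2) := by
  set s : ℝ := Real.sqrt N with hs
  have hs2 : s ^ 2 = (N : ℝ) := Real.sq_sqrt (by positivity)
  have hirr : Irrational s := by
    rw [hs]
    refine irrational_sqrt_natCast_iff.mpr (fun h => ?_)
    obtain ⟨r, hr⟩ := h
    have hu : IsUnit r := hsf r (by rw [hr])
    rw [Nat.isUnit_iff] at hu
    rw [hu] at hr
    omega
  set D : ℚ := a ^ 2 - N * b ^ 2 with hDdef
  by_cases hD : D = 0
  · -- degenerate case : a = b = 0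
    have hab : a = 0 ∧ b = 0 := by
      by_cases hb0 : b = 0
      · constructor
        · have : a ^ 2 = 0 := by rw [hDdef, hb0] at hD; simpa using hD
          exact pow_eq_zero_iff (n := 2) (by norm_num) |>.mp this
        · exact hb0
      · exfalso
        apply hirr
        refine ⟨|a / b|, ?_⟩
        have hsq : ((|a / b| : ℚ) : ℝ) ^ 2 = s ^ 2 := by
          rw [hs2]
          push_cast
          rw [abs_div, div_pow, sq_abs, sq_abs]
          have h' : a ^ 2 = (N : ℚ) * b ^ 2 := by
            rw [hDdef] at hD; linarith [sub_eq_zero.mp hD]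
          rw [show ((a : ℝ)) ^ 2 = ((N:ℚ) : ℝ) * (b:ℝ) ^ 2 by
            exact_mod_cast congrArg (Rat.cast (K := ℝ)) h']
          push_cast
          field_simp
        have h1 : (0 : ℝ) ≤ ((|a / b| : ℚ) : ℝ) := by positivity
        have h2 : (0 : ℝ) ≤ s := Real.sqrt_nonneg _
        nlinarith [hsq]
    obtain ⟨ha0, hb0⟩ := hab
    rw [ha0, hb0]
    constructor
    · intro _; exact ⟨0, by norm_num⟩
    · intro _; simpa using isIntegral_zero
  · -- nondegenerate case
    have hprod : ((a : ℝ) + (b : ℝ) * s) * ((a : ℝ) - (b : ℝ) * s) = (D : ℝ) := by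
      rw [hDdef]; push_cast; linear_combination (-(b:ℝ)^2) * hs2
    have hDR : (D : ℝ) ≠ 0 := by exact_mod_cast hD
    have hσ : (a : ℝ) - (b : ℝ) * s ≠ 0 := fun h => hDR (by rw [← hprod, h, mul_zero])
    have hα : (a : ℝ) + (b : ℝ) * s ≠ 0 := fun h => hDR (by rw [← hprod, h, zero_mul])
    set β : ℝ := ((a : ℝ) + (b : ℝ) * s) / ((a : ℝ) - (b : ℝ) * s) with hβdef
    constructor
    · intro hβ
      by_cases hq : ∃ q : ℚ, (q : ℝ) = β
      · -- β rational : β = 1 or β = -1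
        obtain ⟨q, hqβ⟩ := hq
        have hmul : (q : ℝ) * ((a : ℝ) - (b : ℝ) * s) = (a : ℝ) + (b : ℝ) * s := by
          rw [hqβ, hβdef]; field_simp
        have key : ((b * (q + 1) : ℚ) : ℝ) * s = ((a * (q - 1) : ℚ) : ℝ) := by
          push_cast
          linear_combination -hmul
        by_cases hbq : b * (q + 1) = 0
        · rcases mul_eq_zero.mp hbq with hb0 | hq1
          · exact ⟨4, by rw [hDdef, hb0]; push_cast; ring⟩
          · have ha0 : a = 0 := by
              have h0 : ((a * (q - 1) : ℚ) : ℝ) = 0 := by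
                rw [← key, show (b * (q + 1) : ℚ) = 0 from hbq]
                simp
              have h0' : a * (q - 1) = 0 := by exact_mod_cast h0
              rcases mul_eq_zero.mp h0' with h | h
              · exact h
              · exfalso
                have hqm : q = -1 := by linarith
                rw [hqm] at h
                norm_num at h
            exact ⟨0, by rw [ha0]; ring⟩
        · exfalso
          apply hirr
          refine ⟨a * (q - 1) / (b * (q + 1)), ?_⟩
          have hbqR : ((b * (q + 1) : ℚ) : ℝ) ≠ 0 := by exact_mod_cast hbq
          push_cast at key hbqR ⊢
          rw [div_eq_iff hbqR]
          linear_combination -key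
      · -- β irrational
        set t : ℚ := 2 * (a ^ 2 + N * b ^ 2) / D with htdef
        have htD : (t : ℝ) * (D : ℝ) = 2 * ((a:ℝ)^2 + (N:ℝ)*(b:ℝ)^2) := by
          have h' : t * D = 2 * (a ^ 2 + N * b ^ 2) := by rw [htdef]; field_simp
          exact_mod_cast congrArg (Rat.cast (K := ℝ)) h'
        have hroot : Polynomial.aeval β (X ^ 2 - C t * X + 1 : ℚ[X]) = 0 := by
          simp only [map_add, map_sub, map_mul, map_pow, aeval_X, aeval_C, map_one]
          show β ^ 2 - (t : ℝ) * β + 1 = 0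
          rw [hβdef]
          field_simp
          linear_combination (2*(b:ℝ)^2) * hs2 -
            (t:ℝ) * hprod - htD
        have hβℚ : IsIntegral ℚ β := hβ.tower_top
        have hdvd : minpoly ℚ β ∣ (X ^ 2 - C t * X + 1 : ℚ[X]) := minpoly.dvd ℚ β hroot
        have hmon : (X ^ 2 - C t * X + 1 : ℚ[X]).Monic := by monicity!
        have hndeg : (X ^ 2 - C t * X + 1 : ℚ[X]).natDegree = 2 := by compute_degree!
        have hdeg2 : 2 ≤ (minpoly ℚ β).natDegree := by
          refine (minpoly.two_le_natDegree_iff hβℚ).mpr ?_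
          rintro ⟨q, hq'⟩
          exact hq ⟨q, hq'⟩
        have heq : minpoly ℚ β = X ^ 2 - C t * X + 1 := by
          refine Polynomial.eq_of_dvd_of_natDegree_le_of_leadingCoeff hdvd ?_ ?_
          · rw [hndeg]; exact hdeg2
          · rw [(minpoly.monic hβℚ).leadingCoeff, hmon.leadingCoeff]
        have hmap : minpoly ℚ β = (minpoly ℤ β).map (algebraMap ℤ ℚ) := by
          have h' := minpoly.isIntegrallyClosed_eq_field_fractions ℚ ℝ (R := ℤ) (S := ℝ) hβ
          simpa using h'
        have hc : ((minpoly ℤ β).coeff 1 : ℚ) = -t := by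
          have h1 : (minpoly ℚ β).coeff 1 = -t := by
            rw [heq]; simp [coeff_X_pow, coeff_one]
          rw [hmap, coeff_map] at h1
          exact_mod_cast h1
        refine ⟨-(minpoly ℤ β).coeff 1 + 2, ?_⟩
        have ht : ((-(minpoly ℤ β).coeff 1 + 2 : ℤ) : ℚ) = t + 2 := by push_cast; rw [hc]; ring
        rw [ht, htdef, hDdef]
        have hD' : a ^ 2 - N * b ^ 2 ≠ 0 := hD
        field_simp
        ring
    · rintro ⟨z, hz⟩
      refine ⟨X ^ 2 - C (z - 2) * X + 1, by monicity!, ?_⟩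
      simp only [eval₂_add, eval₂_sub, eval₂_mul, eval₂_pow, eval₂_X, eval₂_C, eval₂_one]
      show β ^ 2 - (algebraMap ℤ ℝ) (z - 2) * β + 1 = 0
      have hzR : (4:ℝ) * (a:ℝ) ^ 2 = (z:ℝ) * ((a:ℝ) ^ 2 - (N:ℝ) * (b:ℝ) ^ 2) := by
        exact_mod_cast congrArg (Rat.cast (K := ℝ)) hz
      have htD : ((z:ℝ) - 2) * (D:ℝ) = 2*((a:ℝ)^2 + (N:ℝ)*(b:ℝ)^2) := by
        have hDq : (D:ℝ) = (a:ℝ)^2 - (N:ℝ)*(b:ℝ)^2 := by rw [hDdef]; push_cast; ring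
        rw [hDq]; linear_combination -hzR
      rw [hβdef]
      simp only [algebraMap_int_eq, eq_intCast]
      push_cast
      field_simp
      linear_combination (2*(b:ℝ)^2) * hs2 -
        ((z:ℝ)-2) * hprod - htD
end

section
/- Let N be a square-free negative integer with N ≠ −1 and N ≠ −3. Then an algebraic integer α in ℚ(√N) is a d-number if and only if α = ℓ·(√N)^δ for some ℓ ∈ ℤ and δ ∈ {0,1}. -/
lemma rat_int_of_isIntegral {q : ℚ} (h : IsIntegral ℤ ((q : ℂ))) : ∃ k : ℤ, (k : ℚ) = q := by
  have h1 : algebraMap ℚ ℂ q = (q : ℂ) := eq_ratCast _ q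
  rw [← h1] at h
  have h2 : IsIntegral ℤ q := (isIntegral_algebraMap_iff ((algebraMap ℚ ℂ).injective)).mp h
  obtain ⟨y, hy⟩ := IsIntegrallyClosed.isIntegral_iff.mp h2
  exact ⟨y, by simpa using hy⟩

lemma den_one_of_sq_mul {N : ℤ} (hsf : Squarefree N) {q : ℚ} {k : ℤ}
    (h : q ^ 2 * (N : ℚ) = (k : ℚ)) : (q.num : ℚ) = q := by
  have hden : ((q.den : ℤ) : ℚ) ≠ 0 := by exact_mod_cast q.den_nz
  have hq : (q.num : ℚ) = q * ((q.den : ℤ) : ℚ) := by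
    rw [Int.cast_natCast, Rat.mul_den_eq_num]
  have hZ : q.num ^ 2 * N = k * (q.den : ℤ) ^ 2 := by
    have h2 : ((q.num : ℤ) : ℚ) ^ 2 * ((N : ℤ) : ℚ) = ((k : ℤ) : ℚ) * (((q.den : ℤ)) : ℚ) ^ 2 := by
      rw [hq]; linear_combination (((q.den : ℤ)) : ℚ) ^ 2 * h
    exact_mod_cast h2
  have hcop : IsCoprime ((q.den : ℤ)) (q.num) := by
    rw [Int.isCoprime_iff_gcd_eq_one]
    simpa [Int.gcd, Nat.coprime_comm] using q.reduced.symm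
  have hdvd : ((q.den : ℤ)) ^ 2 ∣ N := by
    have hd : ((q.den : ℤ)) ^ 2 ∣ q.num ^ 2 * N := ⟨k, by linarith⟩
    exact (hcop.pow).dvd_of_dvd_mul_left (by rwa [mul_comm] at hd)
  have hunit : IsUnit ((q.den : ℤ)) := hsf _ (by rwa [← sq])
  have : (q.den : ℤ) = 1 := by
    rcases Int.isUnit_iff.mp hunit with h | h
    · exact h
    · exfalso; omega
  exact (Rat.den_eq_one_iff q).mp (by exact_mod_cast this)

/-- For square-free negative N ∉ {−1,−3}: an algebraic integer α in ℚ(√N)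
is a d-number iff α = ℓ·(√N)^δ for some ℓ ∈ ℤ, δ ∈ {0,1}. -/
theorem stmt_3 (N : ℤ) (hNneg : N < 0) (hsf : Squarefree N)
    (h1 : N ≠ -1) (h3 : N ≠ -3)
    (s : ℂ) (hs : s ^ 2 = (N : ℂ))
    (a b : ℚ) (α : ℂ) (hα : α = (a : ℂ) + (b : ℂ) * s)
    (hint : IsIntegral ℤ α) :
    IsIntegral ℤ (α / ((a : ℂ) - (b : ℂ) * s)) ↔
      ∃ (ℓ : ℤ) (δ : Fin 2), α = (ℓ : ℂ) * s ^ (δ : ℕ) := by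
  have hNC : (N : ℂ) ≠ 0 := by exact_mod_cast hNneg.ne
  have hs0 : s ≠ 0 := by
    intro h; rw [h] at hs; exact hNC (by simpa using hs.symm)
  have hcs : (starRingEnd ℂ) s = -s := by
    have h2 : ((starRingEnd ℂ) s) ^ 2 = s ^ 2 := by
      rw [← map_pow, hs]; simp
    have h4 : ((starRingEnd ℂ) s - s) * ((starRingEnd ℂ) s + s) = 0 := by ring_nf; linear_combination h2
    rcases mul_eq_zero.mp h4 with h | h
    · exfalso
      have hre : (starRingEnd ℂ) s = s := by linear_combination h
      have : (s.re : ℂ) = s := (Complex.conj_eq_iff_re).mp hre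
      have h5 : ((s.re ^ 2 : ℝ) : ℂ) = ((N : ℝ) : ℂ) := by push_cast; rw [this, hs]
      have h6 : s.re ^ 2 = (N : ℝ) := by exact_mod_cast h5
      have : (0 : ℝ) ≤ (N : ℝ) := h6 ▸ sq_nonneg _
      exact absurd (by exact_mod_cast this) (not_le.mpr hNneg)
    · linear_combination h
  have hli : ∀ x y : ℚ, (x : ℂ) + (y : ℂ) * s = 0 → x = 0 ∧ y = 0 := by
    intro x y hxy
    have h2 : (x : ℂ) - (y : ℂ) * s = 0 := by
      have := congrArg (starRingEnd ℂ) hxy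
      simpa [map_add, map_mul, hcs, sub_eq_add_neg] using this
    have hx : (x : ℂ) = 0 := by linear_combination (hxy + h2) / 2
    have hy : (y : ℂ) * s = 0 := by linear_combination hxy - hx
    refine ⟨by exact_mod_cast hx, ?_⟩
    rcases mul_eq_zero.mp hy with h | h
    · exact_mod_cast h
    · exact absurd h hs0
  by_cases hab : a = 0 ∧ b = 0
  · obtain ⟨ha, hb⟩ := hab
    constructor
    · intro _; exact ⟨0, 0, by simp [hα, ha, hb]⟩
    · intro _
      have : α / ((a : ℂ) - (b : ℂ) * s) = 0 := by simp [hα, ha, hb]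
      rw [this]; exact isIntegral_zero
  -- main case
  have hNQ : ((N : ℤ) : ℚ) < 0 := by exact_mod_cast hNneg
  have hD : 0 < a ^ 2 - b ^ 2 * (N : ℚ) := by
    rcases not_and_or.mp hab with ha | hb
    · have h0 : 0 < a ^ 2 := by positivity
      nlinarith [sq_nonneg b]
    · have h0 : 0 < b ^ 2 := by positivity
      nlinarith [sq_nonneg a]
  have hDC : (((a ^ 2 - b ^ 2 * N : ℚ)) : ℂ) ≠ 0 := by
    intro h; exact hD.ne' (by exact_mod_cast h)
  have hprod : ((a : ℂ) + (b : ℂ) * s) * ((a : ℂ) - (b : ℂ) * s) = ((a ^ 2 - b ^ 2 * N : ℚ) : ℂ) := by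
    push_cast; linear_combination (-(b : ℂ) ^ 2) * hs
  have hαne : (a : ℂ) + (b : ℂ) * s ≠ 0 := fun h => hDC (by rw [← hprod, h, zero_mul])
  have hβne : (a : ℂ) - (b : ℂ) * s ≠ 0 := fun h => hDC (by rw [← hprod, h, mul_zero])
  constructor
  · intro hu
    have hvint : IsIntegral ℤ ((starRingEnd ℂ) (α / ((a : ℂ) - (b : ℂ) * s))) :=
      hu.map ((starRingEnd ℂ).toIntAlgHom)
    have hconj : (starRingEnd ℂ) (α / ((a : ℂ) - (b : ℂ) * s)) =
        ((a : ℂ) - (b : ℂ) * s) / ((a : ℂ) + (b : ℂ) * s) := by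
      rw [hα, map_div₀]
      simp [map_add, map_sub, map_mul, hcs]
      ring_nf
    have hsum : α / ((a : ℂ) - (b : ℂ) * s) + (starRingEnd ℂ) (α / ((a : ℂ) - (b : ℂ) * s)) =
        ((2 * (a ^ 2 + b ^ 2 * N) / (a ^ 2 - b ^ 2 * N) : ℚ) : ℂ) := by
      rw [hconj, hα]
      rw [div_add_div _ _ hβne hαne]
      rw [mul_comm ((a:ℂ) - (b:ℂ)*s) ((a:ℂ) + (b:ℂ)*s), hprod]
      rw [Rat.cast_div]
      rw [div_eq_div_iff hDC hDC]
      push_cast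
      linear_combination (2 * (b:ℂ)^2 * ((a:ℂ)^2 - (b:ℂ)^2 * N)) * hs
    obtain ⟨m, hm⟩ := rat_int_of_isIntegral (by rw [← hsum]; exact hu.add hvint)
    have hmD : (m : ℚ) * (a ^ 2 - b ^ 2 * N) = 2 * (a ^ 2 + b ^ 2 * N) := by
      rw [eq_comm, div_eq_iff hD.ne'] at hm; linarith [hm]
    have hr : (2 * a * b) ^ 2 * (N : ℚ) * 4 = ((m : ℚ) ^ 2 - 4) * (a ^ 2 - b ^ 2 * N) ^ 2 := by
      linear_combination (-(m : ℚ) * (a ^ 2 - b ^ 2 * N) - 2 * (a ^ 2 + b ^ 2 * N)) * hmD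
    have hm2 : (m : ℚ) ^ 2 ≤ 4 := by
      have hnp : (2 * a * b) ^ 2 * (N : ℚ) ≤ 0 :=
        mul_nonpos_of_nonneg_of_nonpos (sq_nonneg _) hNQ.le
      nlinarith [pow_pos hD 2]
    have hm2' : m ^ 2 ≤ 4 := by exact_mod_cast hm2
    have hmlb : -2 ≤ m := by nlinarith
    have hmub : m ≤ 2 := by nlinarith
    have hcase2 : a * b = 0 → ∃ (ℓ : ℤ) (δ : Fin 2), α = (ℓ : ℂ) * s ^ (δ : ℕ) := by
      intro hab0
      rcases mul_eq_zero.mp hab0 with ha | hb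
      · have hα2 : α ^ 2 = ((b ^ 2 * N : ℚ) : ℂ) := by
          rw [hα, ha]; push_cast; linear_combination (b : ℂ) ^ 2 * hs
        obtain ⟨k, hk⟩ := rat_int_of_isIntegral (q := b ^ 2 * N)
          (by rw [← hα2]; exact hint.pow 2)
        have hbnum : (b.num : ℚ) = b := den_one_of_sq_mul hsf (k := k) hk.symm
        refine ⟨b.num, 1, ?_⟩
        have hbc : ((b.num : ℤ) : ℂ) = (b : ℂ) := by exact_mod_cast congrArg (Rat.cast (K := ℂ)) hbnum
        rw [hα, ha, hbc]; push_cast; norm_num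
      · have hαa : α = ((a : ℚ) : ℂ) := by rw [hα, hb]; push_cast; ring
        obtain ⟨ℓ, hℓ⟩ := rat_int_of_isIntegral (by rw [← hαa]; exact hint)
        refine ⟨ℓ, 0, ?_⟩
        have hac : ((ℓ : ℤ) : ℂ) = (a : ℂ) := by exact_mod_cast congrArg (Rat.cast (K := ℂ)) hℓ
        rw [hαa, ← hac]; norm_num
    have hcase1 : ¬ ((2 * a * b) ^ 2 * (N : ℚ) * 4 = -3 * (a ^ 2 - b ^ 2 * N) ^ 2) := by
      intro hr3
      have hq : (4 * a * b / (a ^ 2 - b ^ 2 * N)) ^ 2 * ((N : ℤ) : ℚ) = ((-3 : ℤ) : ℚ) := by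
        rw [div_pow, div_mul_eq_mul_div, div_eq_iff (pow_ne_zero 2 hD.ne')]
        linear_combination hr3
      have hnum := den_one_of_sq_mul hsf hq
      set k := (4 * a * b / (a ^ 2 - b ^ 2 * N)).num with hkdef
      have hkZ : k ^ 2 * N = -3 := by
        have : ((k : ℤ) : ℚ) ^ 2 * ((N : ℤ) : ℚ) = ((-3 : ℤ) : ℚ) := by rw [hnum]; exact hq
        exact_mod_cast this
      have hkub : k ≤ 1 := by nlinarith [hkZ, sq_nonneg (k - 1), sq_nonneg (k + 1)]
      have hklb : -1 ≤ k := by nlinarith [hkZ, sq_nonneg (k - 1), sq_nonneg (k + 1)]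
      interval_cases k <;> omega
    have hcase0 : ¬ ((2 * a * b) ^ 2 * (N : ℚ) * 4 = -4 * (a ^ 2 - b ^ 2 * N) ^ 2) := by
      intro hr4
      have hq : (2 * a * b / (a ^ 2 - b ^ 2 * N)) ^ 2 * ((N : ℤ) : ℚ) = ((-1 : ℤ) : ℚ) := by
        rw [div_pow, div_mul_eq_mul_div, div_eq_iff (pow_ne_zero 2 hD.ne')]
        push_cast
        linear_combination hr4 / 4
      have hnum := den_one_of_sq_mul hsf hq
      set k := (2 * a * b / (a ^ 2 - b ^ 2 * N)).num with hkdef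
      have hkZ : k ^ 2 * N = -1 := by
        have : ((k : ℤ) : ℚ) ^ 2 * ((N : ℤ) : ℚ) = ((-1 : ℤ) : ℚ) := by rw [hnum]; exact hq
        exact_mod_cast this
      have hkub : k ≤ 1 := by nlinarith [hkZ, sq_nonneg (k - 1), sq_nonneg (k + 1)]
      have hklb : -1 ≤ k := by nlinarith [hkZ, sq_nonneg (k - 1), sq_nonneg (k + 1)]
      interval_cases k <;> omega
    interval_cases m
    · refine hcase2 ?_
      have hz : (2 * a * b) ^ 2 * (N : ℚ) = 0 := by
        have h0 : (2 * a * b) ^ 2 * (N : ℚ) * 4 = 0 := by linear_combination hr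
        linarith
      have h2 : (2 * a * b) ^ 2 = (0 : ℚ) := by
        rcases mul_eq_zero.mp hz with h | h
        · exact h
        · exact absurd h hNQ.ne
      have := pow_eq_zero_iff (n := 2) (by norm_num) |>.mp h2
      linarith
    · exact absurd (by linear_combination hr) hcase1
    · exact absurd (by linear_combination hr) hcase0
    · exact absurd (by linear_combination hr) hcase1
    · refine hcase2 ?_
      have hz : (2 * a * b) ^ 2 * (N : ℚ) = 0 := by
        have h0 : (2 * a * b) ^ 2 * (N : ℚ) * 4 = 0 := by linear_combination hr
        linarith
      have h2 : (2 * a * b) ^ 2 = (0 : ℚ) := by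
        rcases mul_eq_zero.mp hz with h | h
        · exact h
        · exact absurd h hNQ.ne
      have := pow_eq_zero_iff (n := 2) (by norm_num) |>.mp h2
      linarith
  · rintro ⟨ℓ, δ, hαeq⟩
    fin_cases δ
    · have h0 : ((a - ℓ : ℚ) : ℂ) + (b : ℂ) * s = 0 := by
        rw [hα] at hαeq; push_cast; simp at hαeq; linear_combination hαeq
      obtain ⟨ha', hb'⟩ := hli _ _ h0
      have hb : b = 0 := hb'
      have hane : (a : ℂ) ≠ 0 := by
        simpa [hb] using hβne
      rw [hα, hb]
      simp only [Rat.cast_zero, zero_mul, add_zero, sub_zero]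
      rw [div_self hane]
      exact isIntegral_one
    · have h0 : ((a : ℚ) : ℂ) + ((b - ℓ : ℚ) : ℂ) * s = 0 := by
        rw [hα] at hαeq; push_cast; simp at hαeq; linear_combination hαeq
      obtain ⟨ha', hb'⟩ := hli _ _ h0
      have hbne : (b : ℂ) * s ≠ 0 := by
        simpa [ha'] using hαne
      rw [hα, ha']
      simp only [Rat.cast_zero, zero_mul, zero_add, zero_sub]
      rw [div_neg, div_self hbne]
      exact (isIntegral_one).neg
end

section
/- An algebraic integer α in ℚ(i) is a d-number if and only if α = ℓ·i^m·(1+i)^δ for some ℓ, m ∈ ℤ and δ ∈ {0,1}. -/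
open Complex

private lemma descend_aux (q : ℚ) (h : IsIntegral ℤ ((q:ℂ))) : ∃ z : ℤ, (z:ℚ) = q := by
  have h2 : IsIntegral ℤ q := by
    rw [show ((q:ℂ)) = algebraMap ℚ ℂ q from (eq_ratCast (algebraMap ℚ ℂ) q).symm] at h
    exact (isIntegral_algebraMap_iff (algebraMap ℚ ℂ).injective).mp h
  exact IsIntegrallyClosed.isIntegral_iff.mp h2

private lemma even_even_aux (P Q N : ℤ) (h : P^2 + Q^2 = 4*N) : Even P ∧ Even Q := by
  rcases Int.even_or_odd P with ⟨k,hk⟩ | ⟨k,hk⟩ <;>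
    rcases Int.even_or_odd Q with ⟨l,hl⟩ | ⟨l,hl⟩ <;> subst hk hl
  · exact ⟨⟨k, rfl⟩, ⟨l, rfl⟩⟩
  · exfalso
    have e : 4*(k*k) + 4*(l*l) + 4*l + 1 = 4*N := by linear_combination h
    generalize k*k = K at e; generalize l*l = L at e; omega
  · exfalso
    have e : 4*(k*k) + 4*k + 4*(l*l) + 1 = 4*N := by linear_combination h
    generalize k*k = K at e; generalize l*l = L at e; omega
  · exfalso
    have e : 4*(k*k) + 4*k + 4*(l*l) + 4*l + 2 = 4*N := by linear_combination h
    generalize k*k = K at e; generalize l*l = L at e; omega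

private lemma comp_int_aux (a b : ℚ) (h : IsIntegral ℤ ((a:ℂ) + (b:ℂ)*I)) :
    ∃ x y : ℤ, (x:ℚ) = a ∧ (y:ℚ) = b := by
  have hI := Complex.isIntegral_int_I
  have hc : IsIntegral ℤ ((a:ℂ) - (b:ℂ)*I) := by
    have := h.map (starRingEnd ℂ).toIntAlgHom
    simpa [map_add, map_mul, Complex.conj_I, sub_eq_add_neg] using this
  have hP : IsIntegral ℤ (((2*a : ℚ)):ℂ) := by
    have := h.add hc
    convert this using 1
    · rfl
    push_cast; ring
  have hw : IsIntegral ℤ ((b:ℂ) + (a:ℂ)*I) := by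
    have := hI.mul hc
    convert this using 1
    · rfl
    ring_nf
    simp [Complex.I_sq]
  have hwc : IsIntegral ℤ ((b:ℂ) - (a:ℂ)*I) := by
    have := hw.map (starRingEnd ℂ).toIntAlgHom
    simpa [map_add, map_mul, Complex.conj_I, sub_eq_add_neg] using this
  have hQ : IsIntegral ℤ (((2*b : ℚ)):ℂ) := by
    have := hw.add hwc
    convert this using 1
    · rfl
    push_cast; ring
  have hN : IsIntegral ℤ (((a^2 + b^2 : ℚ)):ℂ) := by
    have := h.mul hc
    convert this using 1
    · rfl
    push_cast; ring_nf
    rw [Complex.I_sq]; ring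
  obtain ⟨P, hPe⟩ := descend_aux _ hP
  obtain ⟨Q, hQe⟩ := descend_aux _ hQ
  obtain ⟨N, hNe⟩ := descend_aux _ hN
  have key : P^2 + Q^2 = 4*N := by
    have : ((P^2 + Q^2 : ℤ) : ℚ) = ((4*N : ℤ) : ℚ) := by
      push_cast; rw [hPe, hQe, hNe]; ring
    exact_mod_cast this
  obtain ⟨hPev, hQev⟩ := even_even_aux P Q N key
  obtain ⟨k, hk⟩ := hPev
  obtain ⟨l, hl⟩ := hQev
  refine ⟨k, l, ?_, ?_⟩
  · have : ((k + k : ℤ) : ℚ) = 2*a := by rw [← hk]; exact hPe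
    push_cast at this; linarith
  · have : ((l + l : ℤ) : ℚ) = 2*b := by rw [← hl]; exact hQe
    push_cast at this; linarith

/-- An algebraic integer α in ℚ(i) is a d-number iff α = ℓ·i^m·(1+i)^δ
for some ℓ, m ∈ ℤ and δ ∈ {0,1}. -/
theorem stmt_4 (a b : ℚ) (α : ℂ) (hα : α = (a : ℂ) + (b : ℂ) * Complex.I)
    (hint : IsIntegral ℤ α) :
    IsIntegral ℤ (α / ((a : ℂ) - (b : ℂ) * Complex.I)) ↔
      ∃ (ℓ m : ℤ) (δ : Fin 2),
        α = (ℓ : ℂ) * Complex.I ^ m * (1 + Complex.I) ^ (δ : ℕ) := by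
  subst hα
  obtain ⟨x, y, hx, hy⟩ := comp_int_aux a b hint
  subst hx; subst hy
  push_cast
  constructor
  · intro h
    by_cases h0 : x = 0 ∧ y = 0
    · exact ⟨0, 0, 0, by simp [h0.1, h0.2]⟩
    · have hN : (x:ℚ)^2 + (y:ℚ)^2 ≠ 0 := by
        intro hc
        have hx2 : (x:ℚ)^2 = 0 := by nlinarith [sq_nonneg (x:ℚ), sq_nonneg (y:ℚ)]
        have hy2 : (y:ℚ)^2 = 0 := by nlinarith [sq_nonneg (x:ℚ), sq_nonneg (y:ℚ)]
        have h1 : (x:ℚ) = 0 := pow_eq_zero_iff two_ne_zero |>.mp hx2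
        have h2 : (y:ℚ) = 0 := pow_eq_zero_iff two_ne_zero |>.mp hy2
        exact h0 ⟨by exact_mod_cast h1, by exact_mod_cast h2⟩
      have hD : ((x:ℂ)) - (y:ℂ)*I ≠ 0 := by
        intro hc
        simp [Complex.ext_iff] at hc
        exact h0 ⟨by exact_mod_cast hc.1, by exact_mod_cast hc.2⟩
      set A : ℚ := ((x:ℚ)^2 - y^2)/(x^2+y^2) with hAdef
      set B : ℚ := ((2*x*y:ℚ))/(x^2+y^2) with hBdef
      have hu : (((x:ℂ)) + (y:ℂ)*I) / ((x:ℂ) - (y:ℂ)*I) = (A : ℂ) + (B : ℂ)*I := by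
        rw [div_eq_iff hD, hAdef, hBdef]
        have hNC : ((x:ℂ)^2 + (y:ℂ)^2) ≠ 0 := by
          intro hc; apply hN; exact_mod_cast hc
        push_cast
        field_simp
        ring_nf
        rw [Complex.I_sq]
        ring
      rw [hu] at h
      obtain ⟨A', B', hA, hB⟩ := comp_int_aux A B h
      have hsumQ : A^2 + B^2 = 1 := by
        rw [hAdef, hBdef]
        field_simp
        ring
      have hsum : A'^2 + B'^2 = 1 := by
        have : ((A'^2 + B'^2 : ℤ) : ℚ) = ((1:ℤ):ℚ) := by
          push_cast; rw [hA, hB]; exact hsumQ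
        exact_mod_cast this
      have hrel : ((x:ℂ)) + (y:ℂ)*I = ((A':ℂ) + (B':ℂ)*I) * (((x:ℂ)) - ((y:ℂ))*I) := by
        rw [show ((A':ℂ)) = ((A' : ℚ) : ℂ) by push_cast; rfl,
            show ((B':ℂ)) = ((B' : ℚ) : ℂ) by push_cast; rfl, hA, hB]
        exact (div_eq_iff hD).mp hu
      have hA1 : -1 ≤ A' ∧ A' ≤ 1 := by constructor <;> nlinarith
      have hB1 : -1 ≤ B' ∧ B' ≤ 1 := by constructor <;> nlinarith
      obtain ⟨hA1a, hA1b⟩ := hA1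
      obtain ⟨hB1a, hB1b⟩ := hB1
      interval_cases A' <;> interval_cases B' <;> norm_num at hsum <;> norm_num at hrel
      · -- A' = -1, B' = 0 : x = 0
        simp [Complex.ext_iff] at hrel
        have hx0' : x = 0 := by
          have : x = -x := by exact_mod_cast hrel
          omega
        exact ⟨y, 1, 0, by simp [hx0']⟩
      · -- A' = 0, B' = -1 : y = -x
        simp [Complex.ext_iff] at hrel
        have hxy' : y = -x := by
          have h1 : x = -y := by exact_mod_cast hrel.1
          omega
        refine ⟨x, 3, 1, ?_⟩
        have h3 : (I:ℂ)^(3:ℤ) = -I := by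
          rw [show (3:ℤ) = 2 + 1 by norm_num, zpow_add₀ I_ne_zero, zpow_one,
            show (2:ℤ) = ((2:ℕ):ℤ) by norm_num, zpow_natCast, Complex.I_sq]
          ring
        rw [h3, hxy']
        push_cast
        simp only [Fin.val_one, pow_one]
        ring_nf
        rw [Complex.I_sq]
        ring
      · -- A' = 0, B' = 1 : y = x
        simp [Complex.ext_iff] at hrel
        have hxy' : y = x := by
          have h1 : x = y := by exact_mod_cast hrel.1
          omega
        refine ⟨x, 0, 1, ?_⟩
        rw [hxy']
        simp only [Fin.val_one, pow_one, zpow_zero, mul_one]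
        ring
      · -- A' = 1, B' = 0 : y = 0
        simp [Complex.ext_iff] at hrel
        have hy0' : y = 0 := by
          have : y = -y := by exact_mod_cast hrel
          omega
        exact ⟨x, 0, 0, by simp [hy0']⟩
  · rintro ⟨ℓ, m, δ, he⟩
    by_cases hl : ℓ = 0
    · subst hl
      simp at he
      rw [he]
      simp only [zero_div]
      exact isIntegral_zero
    · have hconj : ((x:ℂ)) - (y:ℂ)*I = (starRingEnd ℂ) (((x:ℂ)) + (y:ℂ)*I) := by
        simp [map_add, map_mul, Complex.conj_I, sub_eq_add_neg]
      have hce : ((x:ℂ)) - (y:ℂ)*I = (ℓ:ℂ) * (-I)^m * (1-I)^(δ:ℕ) := by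
        rw [hconj, he]
        rw [map_mul, map_mul, map_zpow₀, map_pow]
        simp [Complex.conj_I, sub_eq_add_neg]
      have hne : ((x:ℂ)) - (y:ℂ)*I ≠ 0 := by
        rw [hce]
        refine mul_ne_zero (mul_ne_zero ?_ ?_) ?_
        · exact_mod_cast hl
        · exact zpow_ne_zero m (by simp)
        · exact pow_ne_zero _ (by simp [Complex.ext_iff])
      have hval : (((x:ℂ)) + (y:ℂ)*I) / ((x:ℂ) - (y:ℂ)*I) = ((-1:ℂ))^m * I^(δ:ℕ) := by
        rw [div_eq_iff hne, hce, he]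
        symm
        calc ((-1:ℂ))^m * I^(δ:ℕ) * ((ℓ:ℂ) * (-I)^m * (1-I)^(δ:ℕ))
            = (ℓ:ℂ) * (((-1:ℂ))^m * (-I)^m) * (I^(δ:ℕ) * (1-I)^(δ:ℕ)) := by ring
          _ = (ℓ:ℂ) * I^m * (1+I)^(δ:ℕ) := by
              rw [← mul_zpow, ← mul_pow]
              have e1 : ((-1:ℂ)) * -I = I := by ring
              have e2 : (I:ℂ) * (1 - I) = 1 + I := by
                rw [mul_sub, mul_one, Complex.I_mul_I]; ring
              rw [e1, e2]
      rw [hval]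
      have hI := Complex.isIntegral_int_I
      have hpm : ((-1:ℂ))^m = 1 ∨ ((-1:ℂ))^m = -1 := by
        rcases Int.even_or_odd m with ⟨k,hk⟩|⟨k,hk⟩
        · left; rw [hk, show k+k = 2*k by ring, zpow_mul]; norm_num
        · right; rw [hk, zpow_add₀ (by norm_num : (-1:ℂ) ≠ 0), zpow_mul]; norm_num
      have hIδ : IsIntegral ℤ ((I:ℂ)^(δ:ℕ)) := hI.pow _
      rcases hpm with h1 | h1 <;> rw [h1]
      · simpa using hIδ
      · simpa using hIδ.neg
end

section
/- An algebraic integer α in ℚ(√−3) is a d-number if and only if α = ℓ·ω^m·(√−3)^δ for some ℓ, m ∈ ℤ and δ ∈ {0,1}, where ω = (1+√−3)/2. -/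
open Complex Polynomial

noncomputable def sc : ℂ := Complex.I * (Real.sqrt 3 : ℂ)
noncomputable def wc : ℂ := (1 + sc) / 2

lemma hs2 : sc ^ 2 = -3 := by
  have h3 : ((Real.sqrt 3 : ℝ) : ℂ) ^ 2 = 3 := by
    rw [← Complex.ofReal_pow, Real.sq_sqrt (by norm_num : (3:ℝ) ≥ 0)]; norm_num
  simp [sc, mul_pow, Complex.I_sq, h3]

lemma hs_ne : sc ≠ 0 := by
  intro h; have := hs2; rw [h] at this; norm_num at this

lemma hsc_conj : (starRingEnd ℂ) sc = -sc := by simp [sc]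

lemma hw_ne : wc ≠ 0 := by
  intro h
  have h1 : (1 : ℂ) + sc = 0 := by
    unfold wc at h; field_simp at h; rw [mul_zero] at h; exact h
  have h2 : sc = -1 := by linear_combination h1
  have := hs2; rw [h2] at this; norm_num at this

lemma coef0 (p q : ℝ) (h : (p:ℂ) + (q:ℂ) * sc = 0) : p = 0 ∧ q = 0 := by
  have him := congrArg Complex.im h
  have hre := congrArg Complex.re h
  simp [sc, Complex.add_im, Complex.add_re, Complex.mul_im, Complex.mul_re] at him hre
  exact ⟨hre, him⟩

lemma hw2 : wc ^ 2 = (-1 + sc) / 2 := by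
  unfold wc; linear_combination (1/4 : ℂ) * hs2

lemma hw3 : wc ^ 3 = -1 := by
  unfold wc; linear_combination ((3 + sc)/8 : ℂ) * hs2

lemma hw5 : wc ^ 5 = (1 - sc) / 2 := by
  unfold wc; linear_combination ((sc^3 + 5*sc^2 + 7*sc - 5)/32 : ℂ) * hs2

lemma hw6 : wc ^ 6 = 1 := by
  have h : wc ^ 6 = (wc ^ 3) ^ 2 := by ring
  rw [h, hw3]; norm_num

lemma hwinv : wc * ((1 - sc)/2) = 1 := by
  unfold wc; linear_combination (-(1:ℂ)/4) * hs2

lemma hwconj : (starRingEnd ℂ) wc = (1 - sc) / 2 := by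
  unfold wc sc
  rw [map_div₀, map_add, map_one, map_mul, Complex.conj_I, map_ofNat, Complex.conj_ofReal]
  ring

lemma int_sc : IsIntegral ℤ sc := by
  refine ⟨X ^ 2 + C 3, ?_, ?_⟩
  · monicity!
  · simp [eval₂, hs2]

lemma int_wc : IsIntegral ℤ wc := by
  refine ⟨X ^ 2 - X + C 1, ?_, ?_⟩
  · monicity!
  · simp [eval₂]
    unfold wc
    linear_combination ((1:ℂ)/4) * hs2

lemma lem0 (q : ℚ) (h : IsIntegral ℤ ((q : ℂ))) : ∃ n : ℤ, (n : ℚ) = q := by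
  have hinj : Function.Injective (algebraMap ℚ ℂ) := (algebraMap ℚ ℂ).injective
  have h2 : IsIntegral ℤ q := by
    exact (isIntegral_algHom_iff ((Rat.castHom ℂ).toIntAlgHom) (Rat.cast_injective)).mp h
  obtain ⟨n, hn⟩ := IsIntegrallyClosed.isIntegral_iff.mp h2
  exact ⟨n, hn⟩

lemma int_conj {z : ℂ} (h : IsIntegral ℤ z) : IsIntegral ℤ ((starRingEnd ℂ) z) :=
  h.map ((starRingEnd ℂ).toIntAlgHom)

lemma int_wc_zpow (k : ℤ) : IsIntegral ℤ (wc ^ k) := by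
  set q := k / 6 with hq
  set r := k % 6 with hr
  have hk : k = 6 * q + r := (Int.mul_ediv_add_emod k 6).symm
  have h0 : 0 ≤ r := Int.emod_nonneg k (by norm_num)
  have : wc ^ k = wc ^ (r.toNat) := by
    rw [hk, zpow_add₀ hw_ne, zpow_mul]
    rw [show ((6:ℤ) = ((6:ℕ):ℤ)) from rfl, zpow_natCast, hw6, one_zpow, one_mul]
    rw [← Int.toNat_of_nonneg h0, zpow_natCast]
    rw [Int.toNat_of_nonneg h0]
  rw [this]
  exact int_wc.pow _

lemma lem1 (c d : ℚ) (h : IsIntegral ℤ ((c:ℂ) + (d:ℂ) * sc)) :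
    ∃ C D N : ℤ, (C:ℚ) = 2*c ∧ (D:ℚ) = 2*d ∧ (N:ℚ) = c^2 + 3*d^2 ∧ 2 ∣ C - D := by
  have hconj : (starRingEnd ℂ) ((c:ℂ) + (d:ℂ) * sc) = (c:ℂ) - (d:ℂ) * sc := by
    rw [map_add, map_mul, hsc_conj, map_ratCast, map_ratCast]; ring
  -- trace
  have htr : IsIntegral ℤ (((2*c : ℚ) : ℂ)) := by
    have heq : ((2*c:ℚ):ℂ) = ((c:ℂ) + (d:ℂ) * sc) + (starRingEnd ℂ) ((c:ℂ) + (d:ℂ) * sc) := by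
      rw [hconj]; push_cast; ring
    rw [heq]; exact h.add (int_conj h)
  obtain ⟨C, hC⟩ := lem0 _ htr
  -- norm
  have hnm : IsIntegral ℤ (((c^2 + 3*d^2 : ℚ) : ℂ)) := by
    have heq : ((c^2+3*d^2:ℚ):ℂ) = ((c:ℂ) + (d:ℂ) * sc) * (starRingEnd ℂ) ((c:ℂ) + (d:ℂ) * sc) := by
      rw [hconj]; push_cast; linear_combination ((d:ℂ)^2) * hs2
    rw [heq]; exact h.mul (int_conj h)
  obtain ⟨N, hN⟩ := lem0 _ hnm
  -- 6d
  have h6d : IsIntegral ℤ (((6*d : ℚ) : ℂ)) := by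
    have heq : ((6*d:ℚ):ℂ) = -((((c:ℂ) + (d:ℂ) * sc) * sc) + (starRingEnd ℂ) (((c:ℂ) + (d:ℂ) * sc) * sc)) := by
      rw [map_mul, hconj, hsc_conj]; push_cast; linear_combination (2*(d:ℂ)) * hs2
    rw [heq]; exact ((h.mul int_sc).add (int_conj (h.mul int_sc))).neg
  obtain ⟨E, hE⟩ := lem0 _ h6d
  have hq1 : (E:ℚ)^2 = 3*(4*(N:ℚ) - (C:ℚ)^2) := by rw [hE, hC, hN]; ring
  have hz1 : E^2 = 3*(4*N - C^2) := by exact_mod_cast hq1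
  have h3E : (3:ℤ) ∣ E := Int.prime_three.dvd_of_dvd_pow (n := 2) ⟨4*N - C^2, hz1⟩
  obtain ⟨D, hD⟩ := h3E
  have hDq : (D:ℚ) = 2*d := by
    have h3D : (3:ℚ) * (D:ℚ) = 6*d := by
      rw [← hE, hD]; push_cast; ring
    linarith
  have hq2 : (C:ℚ)^2 + 3*(D:ℚ)^2 = 4*(N:ℚ) := by rw [hC, hDq, hN]; ring
  have hz2 : C^2 + 3*D^2 = 4*N := by exact_mod_cast hq2
  have hpar : (2:ℤ) ∣ C - D := by
    have hmod := congrArg (fun n : ℤ => (n : ZMod 2)) hz2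
    push_cast at hmod
    have key : ∀ u v n : ZMod 2, u^2 + 3*v^2 = 4*n → u - v = 0 := by decide
    exact (ZMod.intCast_zmod_eq_zero_iff_dvd _ 2).mp (by push_cast; exact key _ _ _ hmod)
  exact ⟨C, D, N, hC, hDq, hN, hpar⟩

/-- An algebraic integer α in ℚ(√−3) is a d-number iff α = ℓ·ω^m·(√−3)^δ
for some ℓ, m ∈ ℤ and δ ∈ {0,1}, where ω = (1+√−3)/2 and √−3 = i√3. -/
theorem stmt_5 (a b : ℚ) (α : ℂ)
    (hα : α = (a : ℂ) + (b : ℂ) * (Complex.I * (Real.sqrt 3 : ℂ)))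
    (hint : IsIntegral ℤ α) :
    IsIntegral ℤ (α / ((a : ℂ) - (b : ℂ) * (Complex.I * (Real.sqrt 3 : ℂ)))) ↔
      ∃ (ℓ m : ℤ) (δ : Fin 2),
        α = (ℓ : ℂ) * ((1 + Complex.I * (Real.sqrt 3 : ℂ)) / 2) ^ m *
          (Complex.I * (Real.sqrt 3 : ℂ)) ^ (δ : ℕ) := by
  subst hα
  rw [show Complex.I * ((Real.sqrt 3 : ℝ) : ℂ) = sc from rfl,
      show ((1 : ℂ) + sc)/2 = wc from rfl]
  constructor
  · -- forward
    intro h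
    by_cases hz : a = 0 ∧ b = 0
    · exact ⟨0, 0, 0, by simp [hz.1, hz.2]⟩
    have hdenne : (a:ℂ) - (b:ℂ) * sc ≠ 0 := by
      intro h0
      have h1 : ((a:ℝ):ℂ) + ((-b:ℚ):ℝ) * sc = 0 := by push_cast; linear_combination h0
      obtain ⟨ha, hb⟩ := coef0 _ _ h1
      exact hz ⟨by exact_mod_cast ha, by simpa using (show ((-b:ℚ):ℝ) = 0 from hb)⟩
    have hNpos : (0:ℚ) < a^2 + 3*b^2 := by
      rcases not_and_or.mp hz with h' | h' <;> positivity
    have hNne : (a:ℚ)^2 + 3*b^2 ≠ 0 := ne_of_gt hNpos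
    set cq : ℚ := (a^2 - 3*b^2)/(a^2 + 3*b^2) with hcqdef
    set dq : ℚ := (2*a*b)/(a^2 + 3*b^2) with hdqdef
    have key : ((cq:ℂ) + (dq:ℂ) * sc) * ((a:ℂ) - (b:ℂ)*sc) = (a:ℂ) + (b:ℂ)*sc := by
      rw [hcqdef, hdqdef]
      have hNC : ((a:ℂ)^2 + 3*(b:ℂ)^2) ≠ 0 := by
        intro hh
        apply hNne
        exact_mod_cast (by push_cast at hh ⊢; exact hh : (((a^2+3*b^2 : ℚ)):ℂ) = 0)
      push_cast
      field_simp
      ring_nf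
      linear_combination (((b:ℂ))*(a:ℂ)^2*3 + 3*(b:ℂ)^3 - (b:ℂ)*((a:ℂ)^2+3*(b:ℂ)^2) - 2*(a:ℂ)*(b:ℂ)^2 - 2*(a:ℂ)^2*(b:ℂ)) * hs2
    have hγeq : ((a:ℂ) + (b:ℂ)*sc) / ((a:ℂ) - (b:ℂ)*sc) = (cq:ℂ) + (dq:ℂ) * sc := by
      rw [div_eq_iff hdenne]; exact key.symm
    rw [hγeq] at h
    obtain ⟨C, D, N, hC, hD, hN, _⟩ := lem1 _ _ h
    obtain ⟨A, B, M, hA, hB, hM, hABpar⟩ := lem1 _ _ hint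
    have hnorm1 : cq^2 + 3*dq^2 = 1 := by
      rw [hcqdef, hdqdef]; field_simp; ring
    have hN1 : N = 1 := by
      have : (N:ℚ) = 1 := by rw [hN, hnorm1]
      exact_mod_cast this
    have hCD : C^2 + 3*D^2 = 4 := by
      have hq : (C:ℚ)^2 + 3*(D:ℚ)^2 = 4 := by
        rw [hC, hD]; linear_combination 4 * hnorm1
      exact_mod_cast hq
    -- coefficient relations
    have hrel : a - (cq*a + 3*dq*b) = 0 ∧ b - (dq*a - cq*b) = 0 := by
      have h0 : (((a - (cq*a + 3*dq*b) : ℚ)):ℂ) + (((b - (dq*a - cq*b) : ℚ)):ℂ) * sc = 0 := by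
        push_cast
        linear_combination (-1 : ℂ) * key - ((dq:ℂ)*(b:ℂ)) * hs2
      have h1 : (((a - (cq*a + 3*dq*b) : ℚ)):ℝ) = 0 ∧ (((b - (dq*a - cq*b) : ℚ)):ℝ) = 0 := by
        apply coef0
        push_cast at h0 ⊢
        convert h0 using 2 <;> norm_num
      exact ⟨by exact_mod_cast h1.1, by exact_mod_cast h1.2⟩
    obtain ⟨hrel1, hrel2⟩ := hrel
    have hDb : -1 ≤ D ∧ D ≤ 1 := by constructor <;> nlinarith [sq_nonneg C]
    have hCb : -2 ≤ C ∧ C ≤ 2 := by constructor <;> nlinarith [sq_nonneg D]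
    obtain ⟨hD1, hD2⟩ := hDb
    obtain ⟨hC1, hC2⟩ := hCb
    interval_cases D <;> interval_cases C <;> norm_num at hCD <;> norm_num at hC hD
    -- six surviving cases; in order (C,D):
    -- (-1,-1), (1,-1), (-2,0), (2,0), (-1,1), (1,1)
    · -- C = -1, D = -1 : cq = -1/2, dq = -1/2, a = -b, α = B ω^2
      have hcv : cq = -1/2 := by linarith
      have hdv : dq = -1/2 := by linarith
      rw [hcv, hdv] at hrel1
      have hab : a = -b := by linarith
      refine ⟨B, 2, 0, ?_⟩
      rw [show ((0:Fin 2):ℕ) = 0 from rfl, pow_zero, mul_one,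
          show (2:ℤ) = ((2:ℕ):ℤ) from rfl, zpow_natCast, hw2]
      have hBc : ((B:ℤ):ℂ) = 2*(b:ℂ) := by exact_mod_cast hB
      have habc : ((a:ℚ):ℂ) = -(b:ℂ) := by exact_mod_cast hab
      linear_combination habc + ((1 - sc)/2) * hBc
    · -- C = 1, D = -1 : cq = 1/2, dq = -1/2, a = -3b, α = B ω sc
      have hcv : cq = 1/2 := by linarith
      have hdv : dq = -1/2 := by linarith
      rw [hcv, hdv] at hrel1
      have hab : a = -3*b := by linarith
      refine ⟨B, 1, 1, ?_⟩
      rw [show ((1:Fin 2):ℕ) = 1 from rfl, pow_one, zpow_one, show wc = (1+sc)/2 from rfl]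
      have hBc : ((B:ℤ):ℂ) = 2*(b:ℂ) := by exact_mod_cast hB
      have habc : ((a:ℚ):ℂ) = -3*(b:ℂ) := by exact_mod_cast hab
      linear_combination habc + (-(1+sc)*sc/2) * hBc + (-(b:ℂ)) * hs2
    · -- C = -2, D = 0 : cq = -1, dq = 0, a = 0, α = (B/2) sc
      have hcv : cq = -1 := by linarith
      have hdv : dq = 0 := by linarith
      rw [hcv, hdv] at hrel1
      have hab : a = 0 := by linarith
      have hA0 : A = 0 := by
        have : (A:ℚ) = 0 := by rw [hA, hab]; ring
        exact_mod_cast this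
      obtain ⟨k, hk⟩ : 2 ∣ B := by omega
      have hbk : b = k := by
        have : ((B:ℤ):ℚ) = ((2*k:ℤ):ℚ) := by exact_mod_cast hk
        push_cast at this
        rw [hB] at this
        linarith
      refine ⟨k, 0, 1, ?_⟩
      rw [show ((1:Fin 2):ℕ) = 1 from rfl, pow_one, zpow_zero, mul_one]
      have habc : ((a:ℚ):ℂ) = 0 := by exact_mod_cast hab
      have hbkc : ((b:ℚ):ℂ) = ((k:ℤ):ℂ) := by exact_mod_cast hbk
      linear_combination habc + sc * hbkc
    · -- C = 2, D = 0 : cq = 1, dq = 0, b = 0, α = A/2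
      have hcv : cq = 1 := by linarith
      have hdv : dq = 0 := by linarith
      rw [hcv, hdv] at hrel2
      have hab : b = 0 := by linarith
      have hB0 : B = 0 := by
        have : (B:ℚ) = 0 := by rw [hB, hab]; ring
        exact_mod_cast this
      obtain ⟨k, hk⟩ : 2 ∣ A := by omega
      have hak : a = k := by
        have : ((A:ℤ):ℚ) = ((2*k:ℤ):ℚ) := by exact_mod_cast hk
        push_cast at this
        rw [hA] at this
        linarith
      refine ⟨k, 0, 0, ?_⟩
      rw [show ((0:Fin 2):ℕ) = 0 from rfl, pow_zero, zpow_zero, mul_one, mul_one]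
      have habc : ((b:ℚ):ℂ) = 0 := by exact_mod_cast hab
      have hakc : ((a:ℚ):ℂ) = ((k:ℤ):ℂ) := by exact_mod_cast hak
      linear_combination hakc + sc * habc
    · -- C = -1, D = 1 : cq = -1/2, dq = 1/2, a = b, α = B ω
      have hcv : cq = -1/2 := by linarith
      have hdv : dq = 1/2 := by linarith
      rw [hcv, hdv] at hrel1
      have hab : a = b := by linarith
      refine ⟨B, 1, 0, ?_⟩
      rw [show ((0:Fin 2):ℕ) = 0 from rfl, pow_zero, mul_one, zpow_one, show wc = (1+sc)/2 from rfl]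
      have hBc : ((B:ℤ):ℂ) = 2*(b:ℂ) := by exact_mod_cast hB
      have habc : ((a:ℚ):ℂ) = (b:ℂ) := by exact_mod_cast hab
      linear_combination habc + (-(1+sc)/2) * hBc
    · -- C = 1, D = 1 : cq = 1/2, dq = 1/2, a = 3b, α = B ω^5 sc
      have hcv : cq = 1/2 := by linarith
      have hdv : dq = 1/2 := by linarith
      rw [hcv, hdv] at hrel1
      have hab : a = 3*b := by linarith
      refine ⟨B, 5, 1, ?_⟩
      rw [show ((1:Fin 2):ℕ) = 1 from rfl, pow_one, show (5:ℤ) = ((5:ℕ):ℤ) from rfl,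
          zpow_natCast, hw5]
      have hBc : ((B:ℤ):ℂ) = 2*(b:ℂ) := by exact_mod_cast hB
      have habc : ((a:ℚ):ℂ) = 3*(b:ℂ) := by exact_mod_cast hab
      linear_combination habc + (-(1-sc)*sc/2) * hBc + (b:ℂ) * hs2
  · -- backward
    rintro ⟨ℓ, m, δ, hform⟩
    by_cases hl : (ℓ : ℂ) = 0
    · rw [hform, hl]
      simp only [zero_mul]
      rw [zero_div]
      exact isIntegral_zero
    have hvinv : ((1 - sc)/2 : ℂ) = wc⁻¹ := (inv_eq_of_mul_eq_one_right hwinv).symm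
    have hden : (a:ℂ) - (b:ℂ)*sc = (ℓ:ℂ) * (wc ^ (-m)) * (-sc) ^ (δ:ℕ) := by
      have h1 : (starRingEnd ℂ) ((a:ℂ) + (b:ℂ)*sc) = (a:ℂ) - (b:ℂ)*sc := by
        rw [map_add, map_mul, hsc_conj, map_ratCast, map_ratCast]; ring
      rw [← h1, hform, map_mul, map_mul, map_intCast, map_zpow₀, map_pow, hwconj, hsc_conj,
          hvinv, inv_zpow, ← zpow_neg]
    rw [hform, hden]
    have hwm : wc ^ (-m) ≠ 0 := zpow_ne_zero _ hw_ne
    fin_cases δ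
    · simp only [Fin.val_zero, pow_zero, mul_one]
      rw [mul_div_mul_left _ _ hl, div_eq_mul_inv, ← zpow_neg, ← zpow_add₀ hw_ne]
      have : m + -(-m) = 2*m := by ring
      rw [this]
      exact int_wc_zpow _
    · simp only [Fin.val_one, pow_one]
      have heq : ((ℓ:ℂ) * wc ^ m * sc) / ((ℓ:ℂ) * wc ^ (-m) * (-sc)) = -(wc ^ m * (wc ^ (-m))⁻¹) := by
        field_simp [hl, hs_ne, hwm]
      rw [heq, ← zpow_neg, ← zpow_add₀ hw_ne]
      exact (int_wc_zpow _).neg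
end

section
/- Let N ≥ 2 be a square-free integer with fundamental unit ε_N of ℚ(√N) satisfying norm(ε_N) = −1, and write ε_N = (t_N + u_N√N)/2. Then the quartic polynomial x⁴ − k·t_N·x² − k² is irreducible over ℤ for every square-free integer k ≥ 2. Equivalently, there is no square-free k ≥ 2 with √(k·ε_N) ∈ ℚ(√N). -/
open Polynomial

lemma no_sq (t m : ℤ) (ht : 1 ≤ t) : m ^ 2 ≠ t ^ 2 + 4 := by
  intro h
  have h' : |m| ^ 2 = t ^ 2 + 4 := by rw [sq_abs]; exact h
  have h0 : 0 ≤ |m| := abs_nonneg m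
  rcases le_or_gt |m| t with hle | hgt
  · nlinarith
  · rcases eq_or_lt_of_le (Int.add_one_le_of_lt hgt) with heq | hlt
    · have : 2 * t = 3 := by nlinarith
      omega
    · nlinarith

lemma no_sq_k (k A t : ℤ) (hk : k ≠ 0) (ht : 1 ≤ t) : A ^ 2 ≠ k ^ 2 * (t ^ 2 + 4) := by
  intro h
  have hdvd : k ∣ A := by
    rw [← Int.pow_dvd_pow_iff (two_ne_zero)]
    exact ⟨t ^ 2 + 4, h⟩
  obtain ⟨m, rfl⟩ := hdvd
  have hm : m ^ 2 = t ^ 2 + 4 := by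
    have h2 : k ^ 2 * m ^ 2 = k ^ 2 * (t ^ 2 + 4) := by ring_nf; ring_nf at h; linarith
    exact mul_left_cancel₀ (pow_ne_zero 2 hk) h2
  exact no_sq t m ht hm

lemma no_int_root (k t s : ℤ) (hk : k ≠ 0) (ht : 1 ≤ t) : s ^ 4 - k * t * s ^ 2 - k ^ 2 ≠ 0 := by
  intro h
  exact no_sq_k k (2 * s ^ 2 - k * t) t hk ht (by linear_combination 4 * h)

lemma monic_deg2 (g : ℤ[X]) (hm : g.Monic) (hd : g.natDegree = 2) :
    g = X ^ 2 + C (g.coeff 1) * X + C (g.coeff 0) := by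
  ext n
  have h2 : g.coeff 2 = 1 := by
    have := hm.coeff_natDegree; rwa [hd] at this
  match n with
  | 0 => simp only [coeff_add, coeff_C_mul, coeff_C, coeff_X_pow, coeff_X]; norm_num
  | 1 => simp only [coeff_add, coeff_C_mul, coeff_C, coeff_X_pow, coeff_X]; norm_num
  | 2 => simp only [coeff_add, coeff_C_mul, coeff_C, coeff_X_pow, coeff_X, h2]; norm_num
  | (n+3) =>
    have hlt : g.natDegree < n + 3 := by omega
    rw [g.coeff_eq_zero_of_natDegree_lt hlt]
    simp only [coeff_add, coeff_C_mul, coeff_C, coeff_X_pow, coeff_X]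
    norm_num [show ¬(2 = n+3) by omega, show ¬(n+3 = 2) by omega, show ¬(n+3 = 1) by omega, show ¬(n+3 = 0) by omega]

lemma expand_prod (a b c d : ℤ) :
    (X ^ 2 + C a * X + C b) * (X ^ 2 + C c * X + C d)
      = X ^ 4 + C (a + c) * X ^ 3 + C (b + d + a * c) * X ^ 2 + C (a * d + b * c) * X + C (b * d) := by
  simp only [C_add, C_mul]; ring

lemma no_root_fact (k t : ℤ) (hk : k ≠ 0) (ht : 1 ≤ t) (g h : ℤ[X]) (hgm : g.Monic)
    (hd1 : g.natDegree = 1)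
    (heq : (X ^ 4 - C (k * t) * X ^ 2 - C (k ^ 2) : ℤ[X]) = g * h) : False := by
  have hg := hgm.eq_X_add_C hd1
  set r := g.coeff 0 with hr
  have hev : (X ^ 4 - C (k * t) * X ^ 2 - C (k ^ 2) : ℤ[X]).eval (-r) = 0 := by
    rw [heq, eval_mul, hg]; simp
  simp only [eval_sub, eval_mul, eval_pow, eval_X, eval_C] at hev
  apply no_int_root k t r hk ht
  linear_combination hev

lemma no_fact (k t : ℤ) (hk : k ≠ 0) (ht : 1 ≤ t) (g h : ℤ[X])
    (hgm : g.Monic) (hhm : h.Monic) (hg1 : 1 ≤ g.natDegree) (hh1 : 1 ≤ h.natDegree)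
    (hd : g.natDegree + h.natDegree = 4)
    (heq : (X ^ 4 - C (k * t) * X ^ 2 - C (k ^ 2) : ℤ[X]) = g * h) : False := by
  have hg3 : g.natDegree ≤ 3 := by omega
  interval_cases hgd : g.natDegree
  · exact no_root_fact k t hk ht g h hgm hgd heq
  · have hhd : h.natDegree = 2 := by omega
    rw [monic_deg2 g hgm hgd, monic_deg2 h hhm hhd, expand_prod] at heq
    set a := g.coeff 1; set b := g.coeff 0; set c := h.coeff 1; set d := h.coeff 0
    have e3 := congrArg (fun p => coeff p 3) heq
    have e2 := congrArg (fun p => coeff p 2) heq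
    have e1 := congrArg (fun p => coeff p 1) heq
    have e0 := congrArg (fun p => coeff p 0) heq
    simp only [coeff_add, coeff_sub, coeff_C_mul, coeff_C, coeff_X_pow, coeff_X] at e3 e2 e1 e0
    norm_num at e3 e2 e1 e0
    have hc : c = -a := by linarith
    rw [hc] at e1 e2
    have hsplit : a * (d - b) = 0 := by linear_combination -e1
    rcases mul_eq_zero.mp hsplit with ha | hdb
    · rw [ha] at e2
      apply no_sq_k k (b - d) t hk ht
      linear_combination (k * t - (b + d)) * e2 + 4 * e0
    · have hdb' : d = b := by linarith
      rw [hdb'] at e0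
      have hk2 : 0 < k ^ 2 := by positivity
      nlinarith [sq_nonneg b]
  · exact no_root_fact k t hk ht h g hhm (by omega) (by rw [heq, mul_comm])

lemma quartic_irred (k t : ℤ) (hk : k ≠ 0) (ht : 1 ≤ t) :
    Irreducible (X ^ 4 - C (k * t) * X ^ 2 - C (k ^ 2) : ℤ[X]) := by
  set f : ℤ[X] := X ^ 4 - C (k * t) * X ^ 2 - C (k ^ 2) with hf
  have hdeg : f.natDegree = 4 := by rw [hf]; compute_degree!
  have hmon : f.Monic := by rw [hf]; monicity!
  constructor
  · exact fun hu => absurd (natDegree_eq_zero_of_isUnit hu) (by rw [hdeg]; norm_num)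
  · intro g h hfg
    by_contra hcon
    push_neg at hcon
    obtain ⟨hgu, hhu⟩ := hcon
    have hf0 : f ≠ 0 := hmon.ne_zero
    have hgh0 : g * h ≠ 0 := hfg ▸ hf0
    have hg0 : g ≠ 0 := left_ne_zero_of_mul hgh0
    have hh0 : h ≠ 0 := right_ne_zero_of_mul hgh0
    have hlc : g.leadingCoeff * h.leadingCoeff = 1 := by
      rw [← leadingCoeff_mul, ← hfg]; exact hmon
    have hdsum : g.natDegree + h.natDegree = 4 := by
      rw [← natDegree_mul hg0 hh0, ← hfg, hdeg]
    have hg1 : 1 ≤ g.natDegree := by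
      rcases Nat.eq_zero_or_pos g.natDegree with h0 | h1
      · exfalso; apply hgu
        have hun : IsUnit g.leadingCoeff := IsUnit.of_mul_eq_one _ hlc
        rw [leadingCoeff, h0] at hun
        rw [eq_C_of_natDegree_eq_zero h0]
        exact isUnit_C.mpr hun
      · exact h1
    have hh1 : 1 ≤ h.natDegree := by
      rcases Nat.eq_zero_or_pos h.natDegree with h0 | h1
      · exfalso; apply hhu
        have hun : IsUnit h.leadingCoeff := IsUnit.of_mul_eq_one _ (by rw [mul_comm] at hlc; exact hlc)
        rw [leadingCoeff, h0] at hun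
        rw [eq_C_of_natDegree_eq_zero h0]
        exact isUnit_C.mpr hun
      · exact h1
    rcases Int.isUnit_iff.mp (IsUnit.of_mul_eq_one _ hlc) with hpos | hneg
    · have hhm : h.Monic := by
        have h2 := hlc
        rw [hpos, one_mul] at h2
        exact h2
      exact no_fact k t hk ht g h hpos hhm hg1 hh1 hdsum hfg
    · have hhm : h.leadingCoeff = -1 := by
        rw [hneg] at hlc; linarith
      apply no_fact k t hk ht (-g) (-h) (by simp [Monic, hneg])
        (by simp [Monic, hhm]) (by rwa [natDegree_neg]) (by rwa [natDegree_neg])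
        (by rwa [natDegree_neg, natDegree_neg])
      rw [neg_mul_neg]; exact hfg

open Polynomial in
/-- If the fundamental unit ε_N = (t + u√N)/2 of ℚ(√N) has norm −1
(i.e. t² − Nu² = −4), then for every square-free k ≥ 2 the quartic
x⁴ − k·t·x² − k² is irreducible over ℤ; equivalently √(k·ε_N) ∉ ℚ(√N). -/
theorem stmt_7 (N : ℕ) (hN : 2 ≤ N) (hsf : Squarefree N) (t u : ℤ)
    (ht : 0 < t) (hu : 0 < u)
    (hnorm : t ^ 2 - (N : ℤ) * u ^ 2 = -4)
    (hεint : IsIntegral ℤ (((t : ℝ) + (u : ℝ) * Real.sqrt N) / 2))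
    (hε1 : 1 < ((t : ℝ) + (u : ℝ) * Real.sqrt N) / 2)
    (hmin : ∀ x : ℝ, IsIntegral ℤ x → IsIntegral ℤ x⁻¹ →
      (∃ a b : ℚ, x = (a : ℝ) + (b : ℝ) * Real.sqrt N) → 1 < x →
      ((t : ℝ) + (u : ℝ) * Real.sqrt N) / 2 ≤ x) :
    ∀ k : ℤ, 2 ≤ k → Squarefree k →
      Irreducible ((X ^ 4 - C (k * t) * X ^ 2 - C (k ^ 2) : Polynomial ℤ)) ∧
      ¬ ∃ a b : ℚ, ((a : ℝ) + (b : ℝ) * Real.sqrt N) ^ 2 =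
          (k : ℝ) * (((t : ℝ) + (u : ℝ) * Real.sqrt N) / 2) := by
  intro k hk hksf
  refine ⟨quartic_irred k t (by omega) ht, ?_⟩
  rintro ⟨a, b, hab⟩
  have hirr : Irrational (Real.sqrt N) := by
    rw [irrational_sqrt_natCast_iff]
    rintro ⟨m, hm⟩
    have hmu : IsUnit m := hsf m (by rw [hm])
    rw [Nat.isUnit_iff] at hmu
    rw [hmu] at hm
    simp at hm
    omega
  set s := Real.sqrt (N : ℝ) with hs
  have hs2 : s ^ 2 = (N : ℝ) := Real.sq_sqrt (by positivity)
  have key : ((2*a*b - k*u/2 : ℚ) : ℝ) * s = ((k*t/2 - a^2 - N*b^2 : ℚ) : ℝ) := by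
    push_cast
    linear_combination hab - (b : ℝ) ^ 2 * hs2
  have hq : (2*a*b - k*u/2 : ℚ) = 0 := by
    by_contra hq0
    apply Rat.not_irrational ((k*t/2 - a^2 - N*b^2 : ℚ) / (2*a*b - k*u/2 : ℚ))
    have hcast : ((2*a*b - k*u/2 : ℚ) : ℝ) ≠ 0 := Rat.cast_ne_zero.mpr hq0
    have hseq : s = (((k*t/2 - a^2 - N*b^2 : ℚ) / (2*a*b - k*u/2 : ℚ) : ℚ) : ℝ) := by
      rw [Rat.cast_div, eq_div_iff hcast, mul_comm]
      exact key
    exact hseq ▸ hirr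
  have hp : (k*t/2 - a^2 - N*b^2 : ℚ) = 0 := by
    have h0 : ((k*t/2 - a^2 - N*b^2 : ℚ) : ℝ) = 0 := by rw [← key, hq]; simp
    exact_mod_cast h0
  have hnorm' : (t : ℚ)^2 - (N : ℚ) * (u : ℚ)^2 = -4 := by exact_mod_cast hnorm
  have hsq : ((a^2 - N*b^2 : ℚ))^2 = -((k : ℚ)^2) := by
    linear_combination (-((a:ℚ)^2 + N*b^2 + k*t/2)) * hp - (N:ℚ) * (2*a*b + k*u/2) * hq + ((k:ℚ)^2/4) * hnorm'
  have hk2 : (0:ℚ) < (k:ℚ)^2 := by positivity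
  nlinarith [sq_nonneg ((a^2 - N*b^2 : ℚ))]
end

section
/- Let N ≥ 2 be square-free with fundamental unit ε_N of norm 1, and let κ₁, κ₂ ≥ 2 be the square-free integers such that √(κ₁ε_N) and √(κ₂ε_N) lie in ℚ(√N). Then N, κ₁, κ₂ are pairwise distinct, and κ₁κ₂ = gcd(κ₁,κ₂)²·N. -/
lemma fact_val {a b c u w : ℕ} (ha0 : a ≠ 0) (hb0 : b ≠ 0) (hc0 : c ≠ 0) (hu : u ≠ 0)
    (h : a*b*c*u^2 = w^2) (p : ℕ) :
    a.factorization p + b.factorization p + c.factorization p + 2*u.factorization p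
      = 2 * w.factorization p := by
  have h' := congrArg Nat.factorization h
  rw [Nat.factorization_mul (mul_ne_zero (mul_ne_zero ha0 hb0) hc0) (pow_ne_zero _ hu),
      Nat.factorization_mul (mul_ne_zero ha0 hb0) hc0,
      Nat.factorization_mul ha0 hb0, Nat.factorization_pow, Nat.factorization_pow] at h'
  have := congrArg (fun f => f p) h'
  simpa [Finsupp.add_apply, two_mul] using this

lemma key (a b c u w : ℕ) (ha : Squarefree a) (hb : Squarefree b) (hc : Squarefree c)
    (hu : u ≠ 0) (h : a*b*c*u^2 = w^2) : a*b = Nat.gcd a b ^ 2 * c := by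
  have ha0 := ha.ne_zero
  have hb0 := hb.ne_zero
  have hc0 := hc.ne_zero
  have hg0 : Nat.gcd a b ≠ 0 := Nat.gcd_ne_zero_left ha0
  refine Nat.eq_of_factorization_eq (mul_ne_zero ha0 hb0)
    (mul_ne_zero (pow_ne_zero _ hg0) hc0) fun p => ?_
  have hval := fact_val ha0 hb0 hc0 hu h p
  rw [Nat.factorization_mul ha0 hb0, Nat.factorization_mul (pow_ne_zero _ hg0) hc0,
      Nat.factorization_pow]
  have hg : (Nat.gcd a b).factorization p = min (a.factorization p) (b.factorization p) := by
    rw [Nat.factorization_gcd ha0 hb0]; rfl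
  simp only [Finsupp.add_apply, Finsupp.smul_apply, smul_eq_mul, hg]
  have h1 := ha.natFactorization_le_one p
  have h2 := hb.natFactorization_le_one p
  have h3 := hc.natFactorization_le_one p
  omega

lemma key0 (a b u w : ℕ) (ha : Squarefree a) (hb : Squarefree b)
    (hu : u ≠ 0) (h : a*b*u^2 = w^2) : a = b := by
  have ha0 := ha.ne_zero
  have hb0 := hb.ne_zero
  refine Nat.eq_of_factorization_eq ha0 hb0 fun p => ?_
  have hval := fact_val ha0 hb0 one_ne_zero hu (by linarith : a*b*1*u^2 = w^2) p
  have h1 := ha.natFactorization_le_one p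
  have h2 := hb.natFactorization_le_one p
  simp only [Nat.factorization_one, Finsupp.coe_zero, Pi.zero_apply] at hval
  omega

lemma rat_sq_int (q : ℚ) (n : ℤ) (h : q^2 = (n:ℚ)) : ∃ r : ℤ, n = r^2 := by
  have : IsSquare ((n:ℤ):ℚ) := ⟨q, by rw [← h]; ring⟩
  obtain ⟨r, hr⟩ := Rat.isSquare_intCast_iff.mp this
  exact ⟨r, by rw [hr]; ring⟩

lemma step_sq (N : ℕ) (hN : 2 ≤ N) (hsf : Squarefree N) (t u κ : ℤ)
    (hnorm : t ^ 2 - (N : ℤ) * u ^ 2 = 4)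
    (h : ∃ a b : ℚ, ((a : ℝ) + (b : ℝ) * Real.sqrt N) ^ 2 =
      (κ : ℝ) * (((t : ℝ) + (u : ℝ) * Real.sqrt N) / 2)) :
    (∃ r : ℤ, κ*(t+2) = r^2) ∨ (∃ r : ℤ, κ*(t-2) = r^2) := by
  have hirr : Irrational (Real.sqrt N) := by
    rw [irrational_sqrt_natCast_iff]
    rintro ⟨k, hk⟩
    have hk1 : IsUnit k := hsf k (by rw [hk])
    rw [Nat.isUnit_iff] at hk1
    subst hk1
    omega
  obtain ⟨a, b, hab⟩ := h
  have hsN : Real.sqrt N ^ 2 = N := Real.sq_sqrt (by positivity)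
  have hkey : ((a^2 + N*b^2 - κ*t/2 : ℚ) : ℝ) = ((κ*u/2 - 2*a*b : ℚ) : ℝ) * Real.sqrt N := by
    push_cast
    linear_combination hab - (b:ℝ)^2 * hsN
  have hq : (κ*u/2 - 2*a*b : ℚ) = 0 := by
    by_contra hq0
    apply hirr
    set c : ℚ := κ*u/2 - 2*a*b with hc
    set p : ℚ := a^2 + N*b^2 - κ*t/2 with hp
    refine ⟨p / c, ?_⟩
    have hcR : (c : ℝ) ≠ 0 := by exact_mod_cast hq0
    have h2 : ((p/c : ℚ) : ℝ) * (c : ℝ) = (c : ℝ) * Real.sqrt N := by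
      rw [← Rat.cast_mul, div_mul_cancel₀ _ hq0, hkey]
    exact mul_right_cancel₀ hcR
      (by rw [h2, mul_comm] : ((p/c : ℚ) : ℝ) * (c:ℝ) = Real.sqrt N * (c:ℝ))
  have hp : (a^2 + N*b^2 - κ*t/2 : ℚ) = 0 := by
    have hR : ((a^2 + N*b^2 - κ*t/2 : ℚ) : ℝ) = 0 := by rw [hq] at hkey; simpa using hkey
    exact_mod_cast hR
  have hP : (2*a)^2 + N*(2*b)^2 = 2*κ*t := by linear_combination 4*hp
  have hQ : (2*a)*(2*b) = (κ:ℚ)*u := by linear_combination (-2)*hq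
  have hnq : (t:ℚ)^2 - N*u^2 = 4 := by exact_mod_cast hnorm
  set A : ℚ := 2*a
  set B : ℚ := 2*b
  have hfact : (A^2 - N*B^2 - 4*κ) * (A^2 - N*B^2 + 4*κ) = 0 := by
    linear_combination (A^2 + N*B^2 + 2*κ*t) * hP - 4*(N:ℚ)*(A*B + κ*u) * hQ + 4*(κ:ℚ)^2 * hnq
  rcases mul_eq_zero.mp hfact with hcase | hcase
  · left
    refine rat_sq_int A _ ?_
    push_cast
    linarith
  · right
    refine rat_sq_int A _ ?_
    push_cast
    linarith

/-- If the fundamental unit ε_N = (t + u√N)/2 of ℚ(√N) has norm 1 and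
κ₁ ≠ κ₂ are square-free integers ≥ 2 with √(κᵢ·ε_N) ∈ ℚ(√N), then
N, κ₁, κ₂ are pairwise distinct and κ₁κ₂ = gcd(κ₁,κ₂)²·N. -/
theorem stmt_10 (N : ℕ) (hN : 2 ≤ N) (hsf : Squarefree N) (t u : ℤ)
    (ht : 0 < t) (hu : 0 < u)
    (hnorm : t ^ 2 - (N : ℤ) * u ^ 2 = 4)
    (hεint : IsIntegral ℤ (((t : ℝ) + (u : ℝ) * Real.sqrt N) / 2))
    (hε1 : 1 < ((t : ℝ) + (u : ℝ) * Real.sqrt N) / 2)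
    (hmin : ∀ x : ℝ, IsIntegral ℤ x → IsIntegral ℤ x⁻¹ →
      (∃ a b : ℚ, x = (a : ℝ) + (b : ℝ) * Real.sqrt N) → 1 < x →
      ((t : ℝ) + (u : ℝ) * Real.sqrt N) / 2 ≤ x)
    (κ₁ κ₂ : ℤ) (hκ₁ : 2 ≤ κ₁) (hκ₂ : 2 ≤ κ₂)
    (hsf₁ : Squarefree κ₁) (hsf₂ : Squarefree κ₂) (hne : κ₁ ≠ κ₂)
    (h₁ : ∃ a b : ℚ, ((a : ℝ) + (b : ℝ) * Real.sqrt N) ^ 2 =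
      (κ₁ : ℝ) * (((t : ℝ) + (u : ℝ) * Real.sqrt N) / 2))
    (h₂ : ∃ a b : ℚ, ((a : ℝ) + (b : ℝ) * Real.sqrt N) ^ 2 =
      (κ₂ : ℝ) * (((t : ℝ) + (u : ℝ) * Real.sqrt N) / 2)) :
    κ₁ ≠ (N : ℤ) ∧ κ₂ ≠ (N : ℤ) ∧ κ₁ ≠ κ₂ ∧
      κ₁ * κ₂ = (Int.gcd κ₁ κ₂ : ℤ) ^ 2 * (N : ℤ) := by
  have hNz : (2:ℤ) ≤ (N:ℤ) := by exact_mod_cast hN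
  have ht3 : 3 ≤ t := by nlinarith
  have hsf₁' : Squarefree κ₁.natAbs := Int.squarefree_natAbs.mpr hsf₁
  have hsf₂' : Squarefree κ₂.natAbs := Int.squarefree_natAbs.mpr hsf₂
  have h1z : (κ₁.natAbs : ℤ) = κ₁ := Int.natAbs_of_nonneg (by omega)
  have h2z : (κ₂.natAbs : ℤ) = κ₂ := Int.natAbs_of_nonneg (by omega)
  have hgcd : (Int.gcd κ₁ κ₂ : ℤ) = ((Nat.gcd κ₁.natAbs κ₂.natAbs : ℕ) : ℤ) := rfl
  -- same-sign case contradiction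
  have same : ∀ v : ℤ, v ≠ 0 → (∃ r : ℤ, κ₁*v = r^2) → (∃ p : ℤ, κ₂*v = p^2) → False := by
    rintro v hv ⟨r, hr⟩ ⟨p, hp⟩
    have hZ : κ₁ * κ₂ * v^2 = (r*p)^2 := by linear_combination (κ₂*v)*hr + r^2*hp
    have hZ' : κ₁.natAbs * κ₂.natAbs * v.natAbs^2 = (r*p).natAbs^2 := by
      have := congrArg Int.natAbs hZ
      simpa [Int.natAbs_mul, Int.natAbs_pow] using this
    have := key0 _ _ _ _ hsf₁' hsf₂' (Int.natAbs_ne_zero.mpr hv) hZ'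
    apply hne
    rw [← h1z, ← h2z, this]
  -- mixed case: product formula
  have mixed : ∀ (a b : ℤ), Squarefree a.natAbs → Squarefree b.natAbs →
      (∃ r : ℤ, a*(t+2) = r^2) → (∃ p : ℤ, b*(t-2) = p^2) →
      a.natAbs * b.natAbs = Nat.gcd a.natAbs b.natAbs ^ 2 * N := by
    rintro a b hsa hsb ⟨r, hr⟩ ⟨p, hp⟩
    have hZ : a * b * N * u^2 = (r*p)^2 := by
      linear_combination (b*(t-2))*hr + r^2*hp - a*b*hnorm
    have hZ' : a.natAbs * b.natAbs * N * u.natAbs^2 = (r*p).natAbs^2 := by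
      have := congrArg Int.natAbs hZ
      simpa [Int.natAbs_mul, Int.natAbs_pow] using this
    exact key _ _ _ _ _ hsa hsb hsf (Int.natAbs_ne_zero.mpr (by omega)) hZ'
  have hprod : κ₁ * κ₂ = (Int.gcd κ₁ κ₂ : ℤ) ^ 2 * (N : ℤ) := by
    have c1 := step_sq N hN hsf t u κ₁ hnorm h₁
    have c2 := step_sq N hN hsf t u κ₂ hnorm h₂
    rcases c1 with hc1 | hc1 <;> rcases c2 with hc2 | hc2
    · exact absurd (same (t+2) (by omega) hc1 hc2) not_false
    · have h' := congrArg (fun n : ℕ => (n:ℤ)) (mixed κ₁ κ₂ hsf₁' hsf₂' hc1 hc2)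
      simp only [Nat.cast_mul, Nat.cast_pow] at h'
      rw [h1z, h2z] at h'
      rw [hgcd]
      exact h'
    · have h' := congrArg (fun n : ℕ => (n:ℤ)) (mixed κ₂ κ₁ hsf₂' hsf₁' hc2 hc1)
      simp only [Nat.cast_mul, Nat.cast_pow] at h'
      rw [h1z, h2z] at h'
      rw [hgcd, Nat.gcd_comm, mul_comm κ₁ κ₂]
      exact h'
    · exact absurd (same (t-2) (by omega) hc1 hc2) not_false
  refine ⟨?_, ?_, hne, hprod⟩
  · intro hEq
    have hN0 : (N:ℤ) ≠ 0 := by omega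
    have hκeq : κ₂ = (Int.gcd κ₁ κ₂ : ℤ)^2 :=
      mul_left_cancel₀ hN0 (by linear_combination hprod - κ₂*hEq)
    have hUnit : IsUnit ((Int.gcd κ₁ κ₂ : ℤ)) := hsf₂ _ ⟨1, by linear_combination hκeq⟩
    rcases Int.isUnit_iff.mp hUnit with h | h <;> rw [h] at hκeq <;> norm_num at hκeq <;> omega
  · intro hEq
    have hN0 : (N:ℤ) ≠ 0 := by omega
    have hκeq : κ₁ = (Int.gcd κ₁ κ₂ : ℤ)^2 :=
      mul_left_cancel₀ hN0 (by linear_combination hprod - κ₁*hEq)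
    have hUnit : IsUnit ((Int.gcd κ₁ κ₂ : ℤ)) := hsf₁ _ ⟨1, by linear_combination hκeq⟩
    rcases Int.isUnit_iff.mp hUnit with h | h <;> rw [h] at hκeq <;> norm_num at hκeq <;> omega
end

section
/- For every real M ≥ 1, the set of real numbers of the form a + b√N, with N a positive integer, a, b ∈ (1/2)ℤ≥0, which are quadratic d-numbers and are at most M, is finite. Consequently the set of such quadratic d-numbers is a discrete subset of ℝ. -/
/-- x is a quadratic d-number of the form a + b√N with N a positive integer and
a, b nonnegative half-integers: x is an algebraic integer and x divided by its
conjugate a − b√N is an algebraic integer. -/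
def IsNonnegQuadDNumber (x : ℝ) : Prop :=
  ∃ (N : ℕ) (a b : ℚ), 0 < N ∧ 0 ≤ a ∧ 0 ≤ b ∧
    (∃ z : ℤ, a = z / 2) ∧ (∃ z : ℤ, b = z / 2) ∧
    x = (a : ℝ) + (b : ℝ) * Real.sqrt N ∧ IsIntegral ℤ x ∧
    IsIntegral ℤ (x / ((a : ℝ) - (b : ℝ) * Real.sqrt N))

lemma finite_part (M : ℝ) (hM : 1 ≤ M) :
    {x : ℝ | IsNonnegQuadDNumber x ∧ x ≤ M}.Finite := by
  classical
  set K : ℕ := ⌊4 * M ^ 2⌋₊ with hK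
  set Z : ℤ := ⌈2 * M⌉ with hZ
  have hfin : ((Set.Icc 1 K) ×ˢ (Set.Icc (0:ℤ) Z) ×ˢ (Set.Icc (0:ℤ) Z)).Finite :=
    (Set.finite_Icc _ _).prod ((Set.finite_Icc _ _).prod (Set.finite_Icc _ _))
  apply (hfin.image (fun p : ℕ × ℤ × ℤ =>
    (p.2.1 : ℝ) / 2 + (p.2.2 : ℝ) / 2 * Real.sqrt p.1)).subset
  rintro x ⟨⟨N, a, b, hN, ha, hb, ⟨z₁, hz1⟩, ⟨z₂, hz2⟩, hx, -, -⟩, hxM⟩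
  have hM0 : (0:ℝ) ≤ M := le_trans zero_le_one hM
  have hsq1 : (1:ℝ) ≤ Real.sqrt N := by
    rw [show (1:ℝ) = Real.sqrt 1 from (Real.sqrt_one).symm]
    exact Real.sqrt_le_sqrt (by exact_mod_cast hN)
  have hsq0 : (0:ℝ) ≤ Real.sqrt N := Real.sqrt_nonneg _
  have haR : (a : ℝ) = (z₁ : ℝ) / 2 := by rw [hz1]; push_cast; ring
  have hbR : (b : ℝ) = (z₂ : ℝ) / 2 := by rw [hz2]; push_cast; ring
  have ha0 : (0:ℝ) ≤ (a:ℝ) := by exact_mod_cast ha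
  have hb0 : (0:ℝ) ≤ (b:ℝ) := by exact_mod_cast hb
  have hbs0 : (0:ℝ) ≤ (b:ℝ) * Real.sqrt N := mul_nonneg hb0 hsq0
  have haM : (a:ℝ) ≤ M := by nlinarith [hx.symm.le, hxM]
  have hz1Z : z₁ ∈ Set.Icc (0:ℤ) Z := by
    constructor
    · have h : (0:ℝ) ≤ (z₁:ℝ) := by
        have : (0:ℝ) ≤ (z₁:ℝ) / 2 := haR ▸ ha0
        linarith
      exact_mod_cast h
    · have h1 : (z₁:ℝ) ≤ 2 * M := by rw [haR] at haM; linarith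
      have h2 : (z₁:ℝ) ≤ (Z:ℝ) := le_trans h1 (Int.le_ceil _)
      exact_mod_cast h2
  have hK1 : 1 ≤ K := Nat.le_floor (by push_cast; nlinarith)
  have hz20 : 0 ≤ z₂ := by
    have h : (0:ℝ) ≤ (z₂:ℝ) := by
      have : (0:ℝ) ≤ (z₂:ℝ) / 2 := hbR ▸ hb0
      linarith
    exact_mod_cast h
  rcases eq_or_lt_of_le hz20 with h0 | h1
  · -- b = 0
    refine ⟨(1, z₁, 0), ⟨Set.mem_Icc.2 ⟨le_refl 1, hK1⟩, hz1Z,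
      Set.mem_Icc.2 ⟨le_refl 0, by positivity⟩⟩, ?_⟩
    have hb0' : (b:ℝ) = 0 := by rw [hbR, ← h0]; norm_num
    simp only [hx, hb0', haR]
    push_cast
    ring
  · -- 1 ≤ z₂, so b ≥ 1/2
    have hbhalf : (1:ℝ)/2 ≤ (b:ℝ) := by
      rw [hbR]
      have : (1:ℝ) ≤ (z₂:ℝ) := by exact_mod_cast h1
      linarith
    have hbsM : (b:ℝ) * Real.sqrt N ≤ M := by nlinarith [hx.symm.le, hxM]
    have hsqM : Real.sqrt N ≤ 2 * M := by nlinarith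
    have hNM : (N:ℝ) ≤ 4 * M ^ 2 := by
      have h := Real.sq_sqrt (show (0:ℝ) ≤ (N:ℝ) by positivity)
      nlinarith
    have hNK : N ≤ K := Nat.le_floor hNM
    have hbM : (b:ℝ) ≤ M := by nlinarith
    have hz2Z : z₂ ∈ Set.Icc (0:ℤ) Z := by
      refine ⟨hz20, ?_⟩
      have h1' : (z₂:ℝ) ≤ 2 * M := by rw [hbR] at hbM; linarith
      have h2 : (z₂:ℝ) ≤ (Z:ℝ) := le_trans h1' (Int.le_ceil _)
      exact_mod_cast h2
    refine ⟨(N, z₁, z₂), ⟨Set.mem_Icc.2 ⟨hN, hNK⟩, hz1Z, hz2Z⟩, ?_⟩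
    simp only [hx, haR, hbR]

/-- For every M ≥ 1 the set of such quadratic d-numbers at most M is finite;
consequently the set of all of them is discrete in ℝ. -/
theorem stmt_12 :
    (∀ M : ℝ, 1 ≤ M → {x : ℝ | IsNonnegQuadDNumber x ∧ x ≤ M}.Finite) ∧
    ∀ x : ℝ, IsNonnegQuadDNumber x → ∃ δ > 0, ∀ y : ℝ,
      IsNonnegQuadDNumber y → |y - x| < δ → y = x := by
  refine ⟨finite_part, ?_⟩
  intro x hx
  have hx0 : 0 ≤ x := by
    obtain ⟨N, a, b, hN, ha, hb, -, -, hxe, -, -⟩ := hx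
    have ha0 : (0:ℝ) ≤ (a:ℝ) := by exact_mod_cast ha
    have hb0 : (0:ℝ) ≤ (b:ℝ) := by exact_mod_cast hb
    have := Real.sqrt_nonneg (N:ℝ)
    nlinarith
  set S : Set ℝ := {y : ℝ | IsNonnegQuadDNumber y ∧ y ≤ x + 1} with hS
  have hSfin : S.Finite := finite_part (x + 1) (by linarith)
  have hclosed : IsClosed (S \ {x}) := ((hSfin.subset Set.diff_subset)).isClosed
  have hxmem : x ∈ (S \ {x})ᶜ := by simp
  obtain ⟨δ, hδpos, hball⟩ := Metric.isOpen_iff.1 hclosed.isOpen_compl x hxmem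
  refine ⟨min δ 1, lt_min hδpos one_pos, fun y hy hyd => ?_⟩
  have hy1 : |y - x| < 1 := lt_of_lt_of_le hyd (min_le_right _ _)
  have hyS : y ∈ S := ⟨hy, by cases abs_lt.1 hy1 with | intro h1 h2 => linarith⟩
  have hyb : y ∈ Metric.ball x δ := by
    rw [Metric.mem_ball, Real.dist_eq]
    exact lt_of_lt_of_le hyd (min_le_left _ _)
  have := hball hyb
  simp only [Set.mem_compl_iff, Set.mem_diff, Set.mem_singleton_iff, not_and, not_not] at this
  exact this hyS
end

section
/- Let κ ≥ 3 be a square-free integer and n ≥ 1 an integer such that κn² − 4 is not a perfect square. Then α = (κn + √((κn)² − 4κ))/2 is an irrational d-number of field norm κ, and the fundamental unit of the real quadratic field ℚ(√((κn)² − 4κ)) has norm +1. -/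
open Polynomial in
lemma rat_int_of_sq (q : ℚ) (m : ℤ) (h : q ^ 2 = (m : ℚ)) : ∃ w : ℤ, (w : ℚ) = q := by
  have hint : IsIntegral ℤ q := by
    refine ⟨X ^ 2 + C (-m), monic_X_pow_add (degree_C_le.trans_lt (by norm_num)), ?_⟩
    have : eval₂ (algebraMap ℤ ℚ) q (X ^ 2 + C (-m)) = q ^ 2 - (m : ℚ) := by
      rw [eval₂_add, eval₂_pow, eval₂_X, eval₂_C]
      simp [eq_intCast]
      ring
    rw [this, h, sub_self]
  obtain ⟨w, hw⟩ := IsIntegrallyClosed.isIntegral_iff.mp hint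
  exact ⟨w, hw⟩

open Polynomial in
lemma int_cast_integral (m : ℤ) : IsIntegral ℤ ((m : ℝ)) := by
  refine ⟨X - C m, monic_X_sub_C m, ?_⟩
  rw [eval₂_sub, eval₂_X, eval₂_C]
  simp [eq_intCast]

open Polynomial in
lemma half_add_sqrt_integral (t c : ℤ) (s : ℝ) (h : s ^ 2 = (t : ℝ) ^ 2 - 4 * (c : ℝ)) :
    IsIntegral ℤ (((t : ℝ) + s) / 2) := by
  refine ⟨X ^ 2 + (C (-t) * X + C c), monic_X_pow_add degree_linear_lt, ?_⟩
  rw [eval₂_add, eval₂_pow, eval₂_X, eval₂_add, eval₂_mul, eval₂_X, eval₂_C, eval₂_C]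
  rw [show (algebraMap ℤ ℝ) (-t) = ((-t : ℤ) : ℝ) from eq_intCast _ _,
      show (algebraMap ℤ ℝ) c = ((c : ℤ) : ℝ) from eq_intCast _ _]
  push_cast
  linear_combination (1/4 : ℝ) * h

open Polynomial in
lemma coeffs_int (s : ℝ) (hs : Irrational s) (D : ℚ) (hsD : s ^ 2 = (D : ℝ))
    (a b : ℚ) (hb : b ≠ 0) (hint : IsIntegral ℤ ((a : ℝ) + (b : ℝ) * s)) :
    (∃ A : ℤ, (A : ℚ) = 2 * a) ∧ ∃ N : ℤ, (N : ℚ) = a ^ 2 - D * b ^ 2 := by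
  set x : ℝ := (a : ℝ) + (b : ℝ) * s with hx
  have hxirr : Irrational x := (hs.ratCast_mul hb).ratCast_add (q := a)
  set q : ℚ[X] := X ^ 2 + (C (-(2 * a)) * X + C (a ^ 2 - D * b ^ 2)) with hq
  have hqmonic : q.Monic := monic_X_pow_add degree_linear_lt
  have haeval : aeval x q = 0 := by
    rw [hq]
    simp only [map_add, map_mul, map_pow, aeval_X, aeval_C]
    rw [show (algebraMap ℚ ℝ) (-(2*a)) = ((-(2*a) : ℚ) : ℝ) from eq_ratCast _ _,
        show (algebraMap ℚ ℝ) (a^2 - D*b^2) = ((a^2 - D*b^2 : ℚ) : ℝ) from eq_ratCast _ _]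
    push_cast
    rw [hx]
    linear_combination ((b : ℝ))^2 * hsD
  have hint' : IsIntegral ℚ x := hint.tower_top
  have h2 : 2 ≤ (minpoly ℚ x).natDegree := by
    rw [minpoly.two_le_natDegree_iff hint']
    rintro ⟨y, hy⟩
    exact hxirr ⟨y, by simpa [eq_ratCast] using hy⟩
  have hqd : q.natDegree ≤ 2 := by
    refine (natDegree_add_le _ _).trans ?_
    simp only [natDegree_X_pow]
    exact max_le le_rfl (natDegree_linear_le.trans (by norm_num))
  have heq : minpoly ℚ x = q :=
    eq_of_dvd_of_natDegree_le_of_leadingCoeff (minpoly.dvd ℚ x haeval)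
      (hqd.trans h2) (by rw [(minpoly.monic hint').leadingCoeff, hqmonic.leadingCoeff])
  have hmap : minpoly ℚ x = (minpoly ℤ x).map (algebraMap ℤ ℚ) :=
    minpoly.isIntegrallyClosed_eq_field_fractions' ℚ hint
  have hc1 : q.coeff 1 = -(2 * a) := by
    rw [hq]
    simp only [coeff_add, coeff_X_pow, coeff_C_mul, coeff_X_one, coeff_C]
    norm_num
  have hc0 : q.coeff 0 = a ^ 2 - D * b ^ 2 := by
    rw [hq]
    simp only [coeff_add, coeff_X_pow, coeff_C_mul, coeff_X_zero, coeff_C]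
    norm_num
  constructor
  · refine ⟨-((minpoly ℤ x).coeff 1), ?_⟩
    have := congrArg (fun p => Polynomial.coeff p 1) (heq.symm.trans hmap)
    simp only [coeff_map] at this
    rw [hc1] at this
    push_cast
    rw [show ((algebraMap ℤ ℚ) ((minpoly ℤ x).coeff 1)) = (((minpoly ℤ x).coeff 1 : ℤ) : ℚ) from eq_intCast _ _] at this
    linarith [this]
  · refine ⟨(minpoly ℤ x).coeff 0, ?_⟩
    have := congrArg (fun p => Polynomial.coeff p 0) (heq.symm.trans hmap)
    simp only [coeff_map] at this
    rw [hc0] at this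
    rw [show ((algebraMap ℤ ℚ) ((minpoly ℤ x).coeff 0)) = (((minpoly ℤ x).coeff 0 : ℤ) : ℚ) from eq_intCast _ _] at this
    linarith [this]

lemma coords_unique (s : ℝ) (hs : Irrational s) (a b c d : ℚ)
    (h : (a : ℝ) + (b : ℝ) * s = (c : ℝ) + (d : ℝ) * s) : a = c ∧ b = d := by
  by_cases hbd : b = d
  · subst hbd
    have : (a : ℝ) = (c : ℝ) := by linarith
    exact ⟨by exact_mod_cast this, rfl⟩
  · exfalso
    apply hs
    refine ⟨(a - c) / (d - b), ?_⟩
    have hdb : ((d : ℝ) - (b : ℝ)) ≠ 0 := by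
      intro hh
      apply hbd
      have : (b : ℝ) = (d : ℝ) := by linarith
      exact_mod_cast this
    push_cast
    rw [div_eq_iff hdb]
    linarith

lemma inv_coords (s : ℝ) (hs : Irrational s) (Dz : ℤ) (hsD : s ^ 2 = ((Dz : ℚ) : ℝ))
    (a b : ℚ) (hx0 : (a : ℝ) + (b : ℝ) * s ≠ 0) :
    ∃ c d : ℚ, ((a : ℝ) + (b : ℝ) * s)⁻¹ = (c : ℝ) + (d : ℝ) * s ∧
      (a ^ 2 - Dz * b ^ 2) * (c ^ 2 - Dz * d ^ 2) = 1 := by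
  have hsD' : s ^ 2 = (Dz : ℝ) := by rw [hsD]; norm_cast
  by_cases hb : b = 0
  · subst hb
    have ha0 : a ≠ 0 := by intro h; apply hx0; simp [h]
    refine ⟨a⁻¹, 0, ?_, by field_simp; ring⟩
    push_cast
    simp
  · set N : ℚ := a ^ 2 - Dz * b ^ 2 with hN
    have hN0 : N ≠ 0 := by
      intro h
      have hz : ((a:ℝ)+(b:ℝ)*s) * ((a:ℝ)-(b:ℝ)*s) = 0 := by
        have hc : ((N : ℚ) : ℝ) = 0 := by rw [h]; norm_num
        rw [hN] at hc; push_cast at hc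
        linear_combination hc - ((b:ℝ))^2 * hsD'
      rcases mul_eq_zero.mp hz with h' | h'
      · exact hx0 h'
      · apply hs
        refine ⟨a / b, ?_⟩
        have hbR : (b : ℝ) ≠ 0 := by exact_mod_cast hb
        push_cast
        field_simp
        linarith [h']
    have hNR : ((a:ℝ)^2 - (Dz:ℝ)*(b:ℝ)^2) ≠ 0 := by
      intro h; apply hN0; rw [hN]; exact_mod_cast h
    refine ⟨a / N, -b / N, ?_, by rw [hN] at hN0 ⊢; field_simp⟩
    apply inv_eq_of_mul_eq_one_right
    rw [hN]; push_cast
    rw [div_mul_eq_mul_div, ← add_div, mul_div_assoc', div_eq_one_iff_eq hNR]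
    linear_combination (-(b:ℝ)^2) * hsD'

lemma unit_data (s : ℝ) (hs : Irrational s) (Dz : ℤ) (hsD : s ^ 2 = ((Dz : ℚ) : ℝ))
    (a b : ℚ) (hx0 : (a : ℝ) + (b : ℝ) * s ≠ 0)
    (hint : IsIntegral ℤ ((a : ℝ) + (b : ℝ) * s))
    (hinv : IsIntegral ℤ (((a : ℝ) + (b : ℝ) * s)⁻¹)) :
    (∃ A : ℤ, (A : ℚ) = 2 * a) ∧ (∃ B : ℤ, (B : ℚ) = 2 * Dz * b) ∧
      (a ^ 2 - Dz * b ^ 2 = 1 ∨ a ^ 2 - Dz * b ^ 2 = -1) := by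
  have hsD' : s ^ 2 = (Dz : ℝ) := by rw [hsD]; push_cast; ring
  by_cases hb : b = 0
  · subst hb
    have ha0 : a ≠ 0 := by
      intro h; apply hx0; simp [h]
    have h1 : IsIntegral ℤ (a : ℚ) := by
      rw [← isIntegral_algebraMap_iff (algebraMap ℚ ℝ).injective]
      simpa [eq_ratCast] using hint
    have h2 : IsIntegral ℤ (a⁻¹ : ℚ) := by
      rw [← isIntegral_algebraMap_iff (algebraMap ℚ ℝ).injective]
      have h3 : ((a⁻¹ : ℚ) : ℝ) = ((a : ℝ) + ((0 : ℚ) : ℝ) * s)⁻¹ := by push_cast; simp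
      rw [show (algebraMap ℚ ℝ) (a⁻¹ : ℚ) = ((a⁻¹ : ℚ) : ℝ) from eq_ratCast _ _, h3]
      exact hinv
    obtain ⟨w, hw⟩ := IsIntegrallyClosed.isIntegral_iff.mp h1
    obtain ⟨w', hw'⟩ := IsIntegrallyClosed.isIntegral_iff.mp h2
    rw [show (algebraMap ℤ ℚ) w = ((w : ℤ) : ℚ) from eq_intCast _ _] at hw
    rw [show (algebraMap ℤ ℚ) w' = ((w' : ℤ) : ℚ) from eq_intCast _ _] at hw'
    have hww : w * w' = 1 := by
      have : ((w * w' : ℤ) : ℚ) = 1 := by push_cast [hw, hw']; field_simp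
      exact_mod_cast this
    refine ⟨⟨2 * w, by push_cast [hw]; ring⟩, ⟨0, by push_cast; ring⟩, ?_⟩
    left
    rcases (Int.mul_eq_one_iff_eq_one_or_neg_one.mp hww) with ⟨h, _⟩ | ⟨h, _⟩ <;>
      rw [← hw, h] <;> norm_num
  · obtain ⟨⟨A, hA⟩, ⟨N₁, hN₁⟩⟩ := coeffs_int s hs (Dz : ℚ) hsD a b hb hint
    set N : ℚ := a ^ 2 - Dz * b ^ 2 with hN
    have hN0 : N ≠ 0 := by
      intro h
      have hz : ((a:ℝ)+(b:ℝ)*s) * ((a:ℝ)-(b:ℝ)*s) = 0 := by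
        have hc : ((N : ℚ) : ℝ) = 0 := by rw [h]; norm_num
        rw [hN] at hc; push_cast at hc
        linear_combination hc - ((b:ℝ))^2 * hsD'
      rcases mul_eq_zero.mp hz with h' | h'
      · exact hx0 h'
      · apply hs
        refine ⟨a / b, ?_⟩
        have hbR : (b : ℝ) ≠ 0 := by exact_mod_cast hb
        push_cast
        field_simp
        linarith [h']
    have hNR : ((a:ℝ)^2 - (Dz:ℝ)*(b:ℝ)^2) ≠ 0 := by
      intro h; apply hN0; rw [hN]; exact_mod_cast h
    have hinvco : ((a : ℝ) + (b : ℝ) * s)⁻¹ = ((a/N : ℚ) : ℝ) + ((-b/N : ℚ) : ℝ) * s := by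
      apply inv_eq_of_mul_eq_one_right
      rw [hN]; push_cast
      rw [div_mul_eq_mul_div, ← add_div, mul_div_assoc', div_eq_one_iff_eq hNR]
      linear_combination (-(b:ℝ)^2) * hsD'
    obtain ⟨_, ⟨N₂, hN₂⟩⟩ := coeffs_int s hs (Dz : ℚ) hsD (a/N) (-b/N)
      (by simp [hb, hN0]) (by rw [← hinvco]; exact hinv)
    have hNN : N₁ * N₂ = 1 := by
      have : ((N₁ * N₂ : ℤ) : ℚ) = 1 := by
        push_cast [hN₁, hN₂, ← hN]
        field_simp
        ring
      exact_mod_cast this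
    have hBex : ∃ B : ℤ, (B : ℚ) = 2 * Dz * b := by
      apply rat_int_of_sq _ (Dz * (A ^ 2 - 4 * N₁))
      push_cast
      rw [hA, hN₁, hN]
      ring
    refine ⟨⟨A, hA⟩, hBex, ?_⟩
    rcases (Int.mul_eq_one_iff_eq_one_or_neg_one.mp hNN) with ⟨h, _⟩ | ⟨h, _⟩
    · left; rw [← hN₁, h]; norm_num
    · right; rw [← hN₁, h]; norm_num

lemma zpow_coords (s : ℝ) (hs : Irrational s) (Dz : ℤ) (hsD : s ^ 2 = ((Dz : ℚ) : ℝ))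
    (e1 e2 : ℚ) (hx0 : (e1 : ℝ) + (e2 : ℝ) * s ≠ 0) (w : ℚ)
    (hw : e1 ^ 2 - Dz * e2 ^ 2 = w) :
    ∀ k : ℤ, ∃ c d : ℚ, ((e1 : ℝ) + (e2 : ℝ) * s) ^ k = (c : ℝ) + (d : ℝ) * s ∧
      c ^ 2 - Dz * d ^ 2 = w ^ k := by
  have hsD' : s ^ 2 = (Dz : ℝ) := by rw [hsD]; norm_cast
  have hnat : ∀ m : ℕ, ∃ c d : ℚ, ((e1 : ℝ) + (e2 : ℝ) * s) ^ m = (c : ℝ) + (d : ℝ) * s ∧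
      c ^ 2 - Dz * d ^ 2 = w ^ m := by
    intro m
    induction m with
    | zero => exact ⟨1, 0, by norm_num, by norm_num⟩
    | succ m ih =>
      obtain ⟨c, d, h1, h2⟩ := ih
      refine ⟨c * e1 + Dz * d * e2, c * e2 + d * e1, ?_, ?_⟩
      · rw [pow_succ, h1]
        push_cast
        linear_combination ((e2 : ℝ) * (d : ℝ)) * hsD'
      · rw [show w ^ (m+1) = w ^ m * w from pow_succ w m, ← h2, ← hw]; ring
  intro k
  rcases k with m | m
  · obtain ⟨c, d, h1, h2⟩ := hnat m
    exact ⟨c, d, by rw [Int.ofNat_eq_natCast, zpow_natCast]; exact h1,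
      by rw [Int.ofNat_eq_natCast, zpow_natCast]; exact h2⟩
  · obtain ⟨c, d, h1, h2⟩ := hnat (m + 1)
    have hxm0 : ((e1 : ℝ) + (e2 : ℝ) * s) ^ (m + 1) ≠ 0 := pow_ne_zero _ hx0
    obtain ⟨p, q, hinv, hnorm⟩ := inv_coords s hs Dz hsD c d (by rw [← h1]; exact hxm0)
    refine ⟨p, q, ?_, ?_⟩
    · rw [zpow_negSucc, h1, hinv]
    · rw [h2] at hnorm
      rw [zpow_negSucc]
      exact eq_inv_of_mul_eq_one_left (by linarith [hnorm])
set_option maxHeartbeats 2000000 in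
lemma part5 (κ n : ℤ) (hκ : 3 ≤ κ) (hsf : Squarefree κ) (hn : 1 ≤ n)
    (hns : ¬ IsSquare (κ * n ^ 2 - 4))
    (hpos : 0 < (κ * n) ^ 2 - 4 * κ)
    (a b : ℚ)
    (hx0 : (a : ℝ) + (b : ℝ) * Real.sqrt ((((κ * n) ^ 2 - 4 * κ : ℤ) : ℝ)) ≠ 0)
    (hint : IsIntegral ℤ ((a : ℝ) + (b : ℝ) * Real.sqrt ((((κ * n) ^ 2 - 4 * κ : ℤ) : ℝ))))
    (hinv : IsIntegral ℤ (((a : ℝ) + (b : ℝ) * Real.sqrt ((((κ * n) ^ 2 - 4 * κ : ℤ) : ℝ)))⁻¹)) :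
    a ^ 2 - (((κ * n) ^ 2 - 4 * κ : ℤ) : ℚ) * b ^ 2 = 1 := by
  set Dz : ℤ := (κ * n) ^ 2 - 4 * κ with hDzdef
  set s : ℝ := Real.sqrt ((Dz : ℝ)) with hsdef
  have hDz_pos : 0 < Dz := hpos
  have hDznn : (0:ℝ) ≤ ((Dz : ℤ) : ℝ) := by exact_mod_cast hDz_pos.le
  have hs2 : s ^ 2 = ((Dz : ℤ) : ℝ) := Real.sq_sqrt hDznn
  have hsD : s ^ 2 = (((Dz : ℤ) : ℚ) : ℝ) := by rw [hs2]; norm_cast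
  have hM1 : 1 ≤ κ * n ^ 2 - 4 := by nlinarith
  have hDzfac : Dz = κ * (κ * n ^ 2 - 4) := by rw [hDzdef]; ring
  have hnotsq : ¬ IsSquare Dz := by
    rintro ⟨m, hm⟩
    have hκm : κ ∣ m := by
      refine (hsf.dvd_pow_iff_dvd (n := 2) two_ne_zero).mp ?_
      rw [sq, ← hm, hDzfac]
      exact Dvd.intro _ rfl
    obtain ⟨u, hu⟩ := hκm
    have hκ0 : (κ : ℤ) ≠ 0 := by omega
    have h5 : κ * n ^ 2 - 4 = κ * u ^ 2 := by
      apply mul_left_cancel₀ hκ0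
      rw [← hDzfac, hm, hu]; ring
    have h4 : κ ∣ 4 := ⟨n ^ 2 - u ^ 2, by linear_combination -h5⟩
    have hκ4 : κ ≤ 4 := Int.le_of_dvd (by norm_num) h4
    have h34 : κ = 3 ∨ κ = 4 := by omega
    rcases h34 with h | h
    · rw [h] at h4; norm_num at h4
    · have := hsf 2 (by rw [h]; norm_num)
      rw [Int.isUnit_iff] at this
      omega
  have hs_irr : Irrational s := by
    rw [hsdef, irrational_sqrt_intCast_iff]
    exact ⟨hnotsq, hDz_pos.le⟩
  have hs_pos : 0 < s := Real.sqrt_pos.mpr (by exact_mod_cast hDz_pos)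
  have hDz3 : (3 : ℤ) ≤ Dz := by rw [hDzfac]; nlinarith
  have hs_gt1 : 1 < s := by nlinarith [hs2, (by exact_mod_cast hDz3 : (3:ℝ) ≤ ((Dz:ℤ):ℝ))]
  have ht3 : 3 ≤ κ * n := by nlinarith
  have htR : (3 : ℝ) ≤ ((κ : ℝ) * (n : ℝ)) := by exact_mod_cast ht3
  have hs2R : s ^ 2 = (κ : ℝ) ^ 2 * (n : ℝ) ^ 2 - 4 * (κ : ℝ) := by
    rw [hs2, hDzdef]; push_cast; ring
  have hst : s < (κ : ℝ) * (n : ℝ) := by nlinarith [(by exact_mod_cast hκ : (3:ℝ) ≤ (κ:ℝ))]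
  -- α and conjugate
  set α : ℝ := ((κ : ℝ) * (n : ℝ) + s) / 2 with hαdef
  set αc : ℝ := ((κ : ℝ) * (n : ℝ) - s) / 2 with hαcdef
  have hαpos : 0 < α := by rw [hαdef]; positivity
  have hαgt2 : 2 < α := by rw [hαdef]; nlinarith
  have hαint : IsIntegral ℤ α := by
    have := half_add_sqrt_integral (κ * n) κ s (by push_cast; linarith [hs2R])
    convert this using 2
    push_cast; ring
  have hαcint : IsIntegral ℤ αc := by
    have := half_add_sqrt_integral (κ * n) κ (-s) (by push_cast; rw [neg_sq]; linarith [hs2R])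
    convert this using 2
    push_cast; ring
  -- γ = n·α − 1
  set γ : ℝ := (n : ℝ) * α - 1 with hγdef
  have hγ_gt1 : 1 < γ := by
    have hn1 : (1 : ℝ) ≤ (n : ℝ) := by exact_mod_cast hn
    rw [hγdef]; nlinarith
  have hγco : γ = (((κ * n ^ 2 - 2 : ℤ) / 2 : ℚ) : ℝ) + (((n : ℤ) / 2 : ℚ) : ℝ) * s := by
    rw [hγdef, hαdef]; push_cast; ring
  have hγν : ((κ * n ^ 2 - 2 : ℤ) / 2 : ℚ) ^ 2 - ((Dz : ℤ) : ℚ) * (((n : ℤ) / 2 : ℚ)) ^ 2 = 1 := by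
    rw [hDzdef]; push_cast; ring
  have hγinv : γ⁻¹ = (n : ℝ) * αc - 1 := by
    apply inv_eq_of_mul_eq_one_right
    rw [hγdef, hαdef, hαcdef]
    linear_combination (-(n:ℝ)^2/4) * hs2R
  have hγU : γ ≠ 0 ∧ (∃ a b : ℚ, γ = (a : ℝ) + (b : ℝ) * s) ∧ IsIntegral ℤ γ ∧ IsIntegral ℤ γ⁻¹ := by
    refine ⟨by linarith, ⟨_, _, hγco⟩, ?_, ?_⟩
    · rw [hγdef]
      exact ((int_cast_integral n).mul hαint).sub isIntegral_one
    · rw [hγinv]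
      exact ((int_cast_integral n).mul hαcint).sub isIntegral_one
  -- the set of units
  set U : Set ℝ := {x | x ≠ 0 ∧ (∃ a b : ℚ, x = (a : ℝ) + (b : ℝ) * s) ∧
      IsIntegral ℤ x ∧ IsIntegral ℤ x⁻¹} with hUdef
  have hγUU : γ ∈ U := hγU
  have hUmul : ∀ x ∈ U, ∀ y ∈ U, x * y ∈ U := by
    rintro x ⟨hx0', ⟨a', b', rfl⟩, hxi, hxiv⟩ y ⟨hy0', ⟨c', d', rfl⟩, hyi, hyiv⟩
    refine ⟨mul_ne_zero hx0' hy0', ⟨a' * c' + Dz * b' * d', a' * d' + b' * c', ?_⟩,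
      hxi.mul hyi, by rw [mul_inv]; exact hxiv.mul hyiv⟩
    push_cast
    linear_combination ((b' : ℝ) * (d' : ℝ)) * hs2
  have hUinv : ∀ x ∈ U, x⁻¹ ∈ U := by
    rintro x ⟨hx0', ⟨a', b', rfl⟩, hxi, hxiv⟩
    obtain ⟨c', d', hcd, _⟩ := inv_coords s hs_irr Dz hsD a' b' hx0'
    exact ⟨inv_ne_zero hx0', ⟨c', d', hcd⟩, hxiv, by rw [inv_inv]; exact hxi⟩
  have hUone : (1 : ℝ) ∈ U := by
    refine ⟨one_ne_zero, ⟨1, 0, by norm_num⟩, isIntegral_one, by rw [inv_one]; exact isIntegral_one⟩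
  have hUpow : ∀ x ∈ U, ∀ m : ℕ, x ^ m ∈ U := by
    intro x hx m
    induction m with
    | zero => simpa using hUone
    | succ m ih => rw [pow_succ]; exact hUmul _ ih _ hx
  have hUzpow : ∀ x ∈ U, ∀ k : ℤ, x ^ k ∈ U := by
    intro x hx k
    rcases k with m | m
    · rw [Int.ofNat_eq_natCast, zpow_natCast]; exact hUpow x hx m
    · rw [zpow_negSucc]; exact hUinv _ (hUpow x hx (m + 1))
  -- finiteness of units in (1, γ]
  set M : ℤ := ⌈(2 * ((Dz : ℤ) : ℝ) * γ)⌉ with hMdef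
  have hDzR1 : (1 : ℝ) ≤ ((Dz : ℤ) : ℝ) := by exact_mod_cast hDz_pos
  have hMge : 2 * ((Dz : ℤ) : ℝ) * γ ≤ (M : ℝ) := Int.le_ceil _
  set f : ℤ × ℤ → ℝ := fun p => (p.1 : ℝ) / 2 + ((p.2 : ℝ) / (2 * ((Dz : ℤ) : ℝ))) * s with hfdef
  set Sb : Set ℝ := {x | x ∈ U ∧ 1 < x ∧ x ≤ γ} with hSbdef
  have hsub : Sb ⊆ ↑((Finset.Icc (-M) M ×ˢ Finset.Icc (-M) M).image f) := by
    rintro x ⟨⟨hx0', ⟨a', b', rfl⟩, hxi, hxiv⟩, hx1, hxγ⟩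
    obtain ⟨⟨A, hA⟩, ⟨B, hB⟩, hνpm⟩ := unit_data s hs_irr Dz hsD a' b' hx0' hxi hxiv
    have hAR : (A : ℝ) = 2 * (a' : ℝ) := by exact_mod_cast hA
    have hBR : (B : ℝ) = 2 * ((Dz : ℤ) : ℝ) * (b' : ℝ) := by exact_mod_cast hB
    have hDzR0 : ((Dz : ℤ) : ℝ) ≠ 0 := by linarith
    have hxf : (a' : ℝ) + (b' : ℝ) * s = f (A, B) := by
      rw [hfdef]
      simp only
      rw [hAR, hBR]
      field_simp
    have hconj : ((a' : ℝ) + (b' : ℝ) * s) * ((a' : ℝ) - (b' : ℝ) * s)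
        = ((a' ^ 2 - Dz * b' ^ 2 : ℚ) : ℝ) := by
      push_cast
      linear_combination (-(b' : ℝ) ^ 2) * hs2
    have hν1 : |((a' ^ 2 - Dz * b' ^ 2 : ℚ) : ℝ)| = 1 := by
      rcases hνpm with h | h <;> rw [h] <;> norm_num
    have hxpos : (0 : ℝ) < (a' : ℝ) + (b' : ℝ) * s := by linarith
    have hcb : |(a' : ℝ) - (b' : ℝ) * s| ≤ 1 := by
      have h1 : ((a' : ℝ) + (b' : ℝ) * s) * |(a' : ℝ) - (b' : ℝ) * s| = 1 := by
        rw [← abs_of_pos hxpos, ← abs_mul, hconj, hν1]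
      nlinarith [abs_nonneg ((a' : ℝ) - (b' : ℝ) * s)]
    have hcb' := abs_le.mp hcb
    have haR : |(a' : ℝ)| ≤ γ := by
      rw [abs_le]; constructor <;> nlinarith
    have hbsR : |(b' : ℝ) * s| ≤ γ := by
      rw [abs_le]; constructor <;> nlinarith
    have hbR : |(b' : ℝ)| ≤ γ := by
      have h2 : |(b' : ℝ)| * s = |(b' : ℝ) * s| := by
        rw [abs_mul, abs_of_pos hs_pos]
      nlinarith [abs_nonneg ((b' : ℝ))]
    have hγM : 2 * γ ≤ (M : ℝ) := by nlinarith
    have hAb : -M ≤ A ∧ A ≤ M := by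
      have h3 : |(A : ℝ)| ≤ (M : ℝ) := by
        rw [hAR, abs_mul]
        simp only [abs_two]
        nlinarith [abs_nonneg ((a' : ℝ))]
      have h4 := abs_le.mp h3
      exact ⟨by exact_mod_cast h4.1, by exact_mod_cast h4.2⟩
    have hBb : -M ≤ B ∧ B ≤ M := by
      have h3 : |(B : ℝ)| ≤ (M : ℝ) := by
        rw [hBR, abs_mul, abs_mul]
        simp only [abs_two]
        rw [abs_of_pos (by linarith : (0:ℝ) < ((Dz : ℤ) : ℝ))]
        nlinarith [abs_nonneg ((b' : ℝ))]
      have h4 := abs_le.mp h3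
      exact ⟨by exact_mod_cast h4.1, by exact_mod_cast h4.2⟩
    rw [Finset.coe_image]
    exact ⟨(A, B), by
      rw [Finset.mem_coe, Finset.mem_product]
      exact ⟨Finset.mem_Icc.mpr hAb, Finset.mem_Icc.mpr hBb⟩, hxf.symm⟩
  have hfin : Sb.Finite := Set.Finite.subset (Finset.finite_toSet _) hsub
  have hne : Sb.Nonempty := ⟨γ, hγUU, hγ_gt1, le_rfl⟩
  obtain ⟨ε₀, hε₀mem, hε₀min⟩ := Set.exists_min_image Sb id hfin hne
  obtain ⟨hε₀U, hε₀1, hε₀γ⟩ := hε₀mem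
  have hε₀pos : (0 : ℝ) < ε₀ := by linarith
  have hmin' : ∀ y, y ∈ U → 1 < y → ε₀ ≤ y := by
    intro y hyU hy1
    by_cases hyγ : y ≤ γ
    · exact hε₀min y ⟨hyU, hy1, hyγ⟩
    · push_neg at hyγ; linarith
  have hpow : ∀ x, x ∈ U → 0 < x → ∃ k : ℤ, x = ε₀ ^ k := by
    intro x hxU hxpos
    obtain ⟨k, hk1, hk2⟩ := exists_mem_Ico_zpow hxpos hε₀1
    have hz1 : ε₀ ^ (-k) ∈ U := hUzpow ε₀ hε₀U (-k)
    rw [zpow_neg] at hz1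
    have hyU : x * (ε₀ ^ k)⁻¹ ∈ U := hUmul _ hxU _ hz1
    have hε₀k : (0 : ℝ) < ε₀ ^ k := zpow_pos hε₀pos k
    have hyge : 1 ≤ x * (ε₀ ^ k)⁻¹ := by
      rw [← div_eq_mul_inv, le_div_iff₀ hε₀k, one_mul]
      exact hk1
    have hylt : x * (ε₀ ^ k)⁻¹ < ε₀ := by
      rw [← div_eq_mul_inv, div_lt_iff₀ hε₀k]
      calc x < ε₀ ^ (k + 1) := hk2
        _ = ε₀ * ε₀ ^ k := by rw [zpow_add_one₀ (ne_of_gt hε₀pos)]; ring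
    rcases eq_or_lt_of_le hyge with heq | hlt
    · refine ⟨k, ?_⟩
      have := heq.symm
      rwa [mul_inv_eq_one₀ (ne_of_gt hε₀k)] at this
    · exact absurd (hmin' _ hyU hlt) (by linarith)
  -- coordinates of ε₀ and its norm
  obtain ⟨hε₀0, ⟨e1, e2, hε₀co⟩, hε₀int, hε₀inv⟩ := hε₀U
  have hε₀x0 : (e1 : ℝ) + (e2 : ℝ) * s ≠ 0 := by rw [← hε₀co]; exact hε₀0
  obtain ⟨-, -, hν₀pm⟩ := unit_data s hs_irr Dz hsD e1 e2 hε₀x0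
    (by rw [← hε₀co]; exact hε₀int) (by rw [← hε₀co]; exact hε₀inv)
  set w : ℚ := e1 ^ 2 - (Dz : ℚ) * e2 ^ 2 with hwdef
  have hzc := zpow_coords s hs_irr Dz hsD e1 e2 hε₀x0 w rfl
  -- core: no positive unit has norm -1
  have hcore : ∀ a' b' : ℚ, ((a' : ℝ) + (b' : ℝ) * s) ∈ U → 0 < ((a' : ℝ) + (b' : ℝ) * s) →
      a' ^ 2 - (Dz : ℚ) * b' ^ 2 = -1 → False := by
    intro a' b' hU' hpos' hν'
    obtain ⟨j, hj⟩ := hpow _ hU' hpos'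
    obtain ⟨c, d, hcd, hcdν⟩ := hzc j
    have huniq := coords_unique s hs_irr a' b' c d (by rw [← hcd, ← hε₀co]; exact hj)
    have hwj : w ^ j = -1 := by
      rw [← hcdν, ← huniq.1, ← huniq.2]; exact hν'
    have hw_neg : w = -1 := by
      rcases hν₀pm with h | h
      · exfalso; rw [show w = (1:ℚ) from h, one_zpow] at hwj; norm_num at hwj
      · exact h
    obtain ⟨m, hm⟩ := hpow γ hγUU (by linarith)
    obtain ⟨c', d', hcd', hcdν'⟩ := hzc m
    have hγuniq := coords_unique s hs_irr ((κ * n ^ 2 - 2 : ℤ) / 2 : ℚ) ((n : ℤ) / 2 : ℚ) c' d'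
      (by rw [← hcd', ← hε₀co, ← hγco]; exact hm)
    have hwm : w ^ m = 1 := by
      rw [← hcdν', ← hγuniq.1, ← hγuniq.2]; exact hγν
    have hmeven : Even m := by
      rcases Int.even_or_odd m with h | h
      · exact h
      · exfalso
        rw [hw_neg, h.neg_one_zpow] at hwm
        norm_num at hwm
    obtain ⟨m', hm'⟩ := hmeven
    set η : ℝ := ε₀ ^ m' with hηdef
    have hηpos : 0 < η := zpow_pos hε₀pos m'
    have hη0 : η ≠ 0 := ne_of_gt hηpos
    have hγη : γ = η * η := by
      rw [hm, hm', hηdef, ← zpow_add₀ (ne_of_gt hε₀pos)]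
    obtain ⟨p, q, hpq, hpqν⟩ := hzc m'
    have hηco : η = (p : ℝ) + (q : ℝ) * s := by rw [hηdef, hε₀co]; exact hpq
    -- α² = κγ
    have hα2γ : α ^ 2 = (κ : ℝ) * γ := by
      rw [hαdef, hγdef, hαdef]
      linear_combination (1/4 : ℝ) * hs2R
    have hsqrtκ : Real.sqrt (κ : ℝ) = α / η := by
      have hsq : (α / η) ^ 2 = (κ : ℝ) := by
        rw [div_pow, hα2γ, hγη, sq η, mul_div_assoc, div_self (mul_ne_zero hη0 hη0), mul_one]
      rw [← hsq, Real.sqrt_sq (by positivity)]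
    obtain ⟨p', q', hinvco, hinvν⟩ := inv_coords s hs_irr Dz hsD p q (by rw [← hηco]; exact hη0)
    have hαco : α = ((((κ * n : ℤ) : ℚ) / 2 : ℚ) : ℝ) + (((1/2 : ℚ)) : ℝ) * s := by
      rw [hαdef]; push_cast; ring
    set c₀ : ℚ := (((κ * n : ℤ) : ℚ) / 2) * p' + (Dz : ℚ) * (1/2) * q' with hc₀def
    set d₀ : ℚ := (((κ * n : ℤ) : ℚ) / 2) * q' + (1/2) * p' with hd₀def
    have hsqco : Real.sqrt (κ : ℝ) = (c₀ : ℝ) + (d₀ : ℝ) * s := by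
      rw [hsqrtκ, div_eq_mul_inv, hηco, hinvco, hαco, hc₀def, hd₀def]
      push_cast
      linear_combination ((q' : ℝ) / 2) * hs2
    have hκnn : (0:ℝ) ≤ (κ : ℝ) := by exact_mod_cast (by omega : (0:ℤ) ≤ κ)
    have hκsq : (κ : ℝ) = ((c₀ : ℝ) + (d₀ : ℝ) * s) ^ 2 := by
      rw [← hsqco, Real.sq_sqrt hκnn]
    have hcd0 : c₀ * d₀ = 0 := by
      by_contra hcd
      apply hs_irr
      refine ⟨((κ : ℚ) - c₀ ^ 2 - (Dz : ℚ) * d₀ ^ 2) / (2 * (c₀ * d₀)), ?_⟩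
      have h2cd : (2 * (c₀ * d₀) : ℚ) ≠ 0 := mul_ne_zero two_ne_zero hcd
      have h2cdR : ((2 * (c₀ * d₀) : ℚ) : ℝ) ≠ 0 := by exact_mod_cast h2cd
      push_cast
      push_cast at h2cdR
      rw [div_eq_iff h2cdR]
      linear_combination hκsq + (d₀:ℝ)^2 * hs2
    have hcd0R : (c₀ : ℝ) * (d₀ : ℝ) = 0 := by exact_mod_cast hcd0
    have hkey : (κ : ℚ) = c₀ ^ 2 + (Dz : ℚ) * d₀ ^ 2 := by
      have hR : ((κ : ℚ) : ℝ) = ((c₀ ^ 2 + (Dz : ℚ) * d₀ ^ 2 : ℚ) : ℝ) := by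
        push_cast
        linear_combination hκsq + (d₀:ℝ)^2 * hs2 + 2*s*hcd0R
      exact_mod_cast hR
    rcases mul_eq_zero.mp hcd0 with hc0 | hd0
    · have hQ : (κ:ℚ) = (Dz : ℚ) * d₀^2 := by rw [hkey, hc0]; ring
      have hκQ0 : (κ:ℚ) ≠ 0 := by
        intro h
        have : κ = 0 := by exact_mod_cast h
        omega
      have hd₀0 : d₀ ≠ 0 := by
        intro h
        rw [h] at hQ
        norm_num at hQ
        exact hκQ0 (by exact_mod_cast hQ)
      have hone : (1/d₀)^2 = ((κ * n^2 - 4 : ℤ) : ℚ) := by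
        rw [div_pow, one_pow, div_eq_iff (pow_ne_zero 2 hd₀0)]
        have h6 : (κ:ℚ) * 1 = (κ:ℚ) * (((κ * n^2 - 4 : ℤ) : ℚ) * d₀^2) := by
          rw [hDzdef] at hQ
          push_cast at hQ ⊢
          linear_combination hQ
        exact mul_left_cancel₀ hκQ0 h6
      obtain ⟨w', hw'⟩ := rat_int_of_sq (1/d₀) (κ * n^2 - 4) hone
      apply hns
      refine ⟨w', ?_⟩
      have h8 : ((w' : ℚ))^2 = ((κ * n^2 - 4 : ℤ) : ℚ) := by rw [hw']; exact hone
      have h7 : w'^2 = κ * n^2 - 4 := by exact_mod_cast h8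
      rw [← h7]; ring
    · have hQ : (κ:ℚ) = c₀^2 := by rw [hkey, hd0]; ring
      obtain ⟨w', hw'⟩ := rat_int_of_sq c₀ κ hQ.symm
      have h7 : κ = w'^2 := by
        have h8 : ((w' : ℚ))^2 = (κ:ℚ) := by rw [hw']; exact hQ.symm
        exact_mod_cast h8.symm
      have hunit := hsf w' ⟨1, by rw [h7]; ring⟩
      rw [Int.isUnit_iff] at hunit
      rcases hunit with h | h <;> rw [h] at h7 <;> omega
  obtain ⟨-, -, hνpm⟩ := unit_data s hs_irr Dz hsD a b hx0 hint hinv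
  rcases hνpm with h | h
  · exact h
  · exfalso
    rcases lt_or_gt_of_ne hx0 with hneg | hposx
    · have hnegeq : ((-a : ℚ) : ℝ) + ((-b : ℚ) : ℝ) * s = -((a:ℝ) + (b:ℝ)*s) := by
        push_cast; ring
      refine hcore (-a) (-b) ?_ ?_ ?_
      · refine ⟨by rw [hnegeq]; exact neg_ne_zero.mpr hx0, ⟨-a, -b, rfl⟩, ?_, ?_⟩
        · rw [hnegeq]; exact hint.neg
        · rw [hnegeq, inv_neg]; exact hinv.neg
      · rw [hnegeq]; linarith
      · linear_combination h
    · exact hcore a b ⟨hx0, ⟨a, b, rfl⟩, hint, hinv⟩ hposx h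

/-- For square-free κ ≥ 3 and n ≥ 1 with κn² − 4 not a perfect square (and the
implicit assumption (κn)² − 4κ > 0 making ℚ(√((κn)²−4κ)) a real quadratic
field): α = (κn + √((κn)²−4κ))/2 is an irrational d-number of field norm κ, and
every unit of the ring of integers of ℚ(√((κn)²−4κ)) has norm +1, i.e. the
fundamental unit has norm +1. -/
theorem stmt_14 (κ n : ℤ) (hκ : 3 ≤ κ) (hsf : Squarefree κ) (hn : 1 ≤ n)
    (hns : ¬ IsSquare (κ * n ^ 2 - 4))
    (hpos : 0 < (κ * n) ^ 2 - 4 * κ) :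
    Irrational ((((κ * n : ℤ) : ℝ) + Real.sqrt (((κ * n : ℤ) : ℝ) ^ 2 - 4 * (κ : ℝ))) / 2) ∧
    IsIntegral ℤ ((((κ * n : ℤ) : ℝ) + Real.sqrt (((κ * n : ℤ) : ℝ) ^ 2 - 4 * (κ : ℝ))) / 2) ∧
    IsIntegral ℤ (((((κ * n : ℤ) : ℝ) + Real.sqrt (((κ * n : ℤ) : ℝ) ^ 2 - 4 * (κ : ℝ))) / 2) /
      ((((κ * n : ℤ) : ℝ) - Real.sqrt (((κ * n : ℤ) : ℝ) ^ 2 - 4 * (κ : ℝ))) / 2)) ∧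
    ((((κ * n : ℤ) : ℝ) + Real.sqrt (((κ * n : ℤ) : ℝ) ^ 2 - 4 * (κ : ℝ))) / 2) *
      ((((κ * n : ℤ) : ℝ) - Real.sqrt (((κ * n : ℤ) : ℝ) ^ 2 - 4 * (κ : ℝ))) / 2) = (κ : ℝ) ∧
    (∀ a b : ℚ,
      (a : ℝ) + (b : ℝ) * Real.sqrt (((κ * n : ℤ) : ℝ) ^ 2 - 4 * (κ : ℝ)) ≠ 0 →
      IsIntegral ℤ ((a : ℝ) + (b : ℝ) * Real.sqrt (((κ * n : ℤ) : ℝ) ^ 2 - 4 * (κ : ℝ))) →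
      IsIntegral ℤ ((a : ℝ) + (b : ℝ) * Real.sqrt (((κ * n : ℤ) : ℝ) ^ 2 - 4 * (κ : ℝ)))⁻¹ →
      a ^ 2 - (((κ * n) ^ 2 - 4 * κ : ℤ) : ℚ) * b ^ 2 = 1) := by
  set s : ℝ := Real.sqrt (((κ * n : ℤ) : ℝ) ^ 2 - 4 * (κ : ℝ)) with hsdef
  have harg : ((((κ * n) ^ 2 - 4 * κ : ℤ) : ℝ)) = (((κ * n : ℤ) : ℝ)) ^ 2 - 4 * (κ : ℝ) := by
    push_cast; ring
  have hs' : s = Real.sqrt ((((κ * n) ^ 2 - 4 * κ : ℤ) : ℝ)) := by rw [hsdef, harg]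
  have hargnn : (0:ℝ) ≤ (((κ * n : ℤ) : ℝ)) ^ 2 - 4 * (κ : ℝ) := by
    rw [← harg]; exact_mod_cast hpos.le
  have hs2 : s ^ 2 = (((κ * n : ℤ) : ℝ)) ^ 2 - 4 * (κ : ℝ) := Real.sq_sqrt hargnn
  have hs2R : s ^ 2 = (κ : ℝ) ^ 2 * (n : ℝ) ^ 2 - 4 * (κ : ℝ) := by rw [hs2]; push_cast; ring
  have hsnn : 0 ≤ s := Real.sqrt_nonneg _
  have hM1 : 1 ≤ κ * n ^ 2 - 4 := by nlinarith
  have hDzfac : (κ * n) ^ 2 - 4 * κ = κ * (κ * n ^ 2 - 4) := by ring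
  have hnotsq : ¬ IsSquare ((κ * n) ^ 2 - 4 * κ) := by
    rintro ⟨m, hm⟩
    have hκm : κ ∣ m := by
      refine (hsf.dvd_pow_iff_dvd (n := 2) two_ne_zero).mp ?_
      rw [sq, ← hm, hDzfac]
      exact Dvd.intro _ rfl
    obtain ⟨u, hu⟩ := hκm
    have hκ0 : (κ : ℤ) ≠ 0 := by omega
    have h5 : κ * n ^ 2 - 4 = κ * u ^ 2 := by
      apply mul_left_cancel₀ hκ0
      rw [← hDzfac, hm, hu]; ring
    have h4 : κ ∣ 4 := ⟨n ^ 2 - u ^ 2, by linear_combination -h5⟩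
    have hκ4 : κ ≤ 4 := Int.le_of_dvd (by norm_num) h4
    have h34 : κ = 3 ∨ κ = 4 := by omega
    rcases h34 with h | h
    · rw [h] at h4; norm_num at h4
    · have := hsf 2 (by rw [h]; norm_num)
      rw [Int.isUnit_iff] at this
      omega
  have hs_irr : Irrational s := by
    rw [hs', irrational_sqrt_intCast_iff]
    exact ⟨hnotsq, hpos.le⟩
  have ht3 : 3 ≤ κ * n := by nlinarith
  have htR : (3 : ℝ) ≤ ((κ * n : ℤ) : ℝ) := by exact_mod_cast ht3
  have hκR : (3 : ℝ) ≤ (κ : ℝ) := by exact_mod_cast hκ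
  have hst : s < ((κ * n : ℤ) : ℝ) := by nlinarith
  have hαint : IsIntegral ℤ ((((κ * n : ℤ) : ℝ) + s) / 2) :=
    half_add_sqrt_integral (κ * n) κ s hs2
  refine ⟨?_, hαint, ?_, ?_, ?_⟩
  · have h1 : Irrational (((κ * n : ℤ) : ℝ) + s) := hs_irr.intCast_add (κ * n)
    have h2 := h1.ratCast_mul (q := (1:ℚ)/2) (by norm_num)
    have h3 : ((((κ * n : ℤ) : ℝ)) + s) / 2 = (((1:ℚ)/2 : ℚ) : ℝ) * (((κ * n : ℤ) : ℝ) + s) := by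
      push_cast; ring
    rw [h3]
    exact h2
  · have hαc_pos : (0:ℝ) < (((κ * n : ℤ) : ℝ) - s) / 2 := by linarith
    have hdiv : ((((κ * n : ℤ) : ℝ) + s) / 2) / ((((κ * n : ℤ) : ℝ) - s) / 2)
        = (n : ℝ) * ((((κ * n : ℤ) : ℝ) + s) / 2) - 1 := by
      rw [div_eq_iff (ne_of_gt hαc_pos)]
      push_cast
      linear_combination ((n:ℝ)/4) * hs2R
    rw [hdiv]
    exact ((int_cast_integral n).mul hαint).sub isIntegral_one
  · linear_combination (-(1:ℝ)/4) * hs2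
  · intro a b h1 h2 h3
    rw [hs'] at h1 h2 h3
    exact part5 κ n hκ hsf hn hns hpos a b h1 h2 h3
end

section
/- Let M ≥ 1 be an integer. The number of real quadratic d-numbers α = a + b√N (N ≥ 2 square-free, a, b ∈ (1/2)ℤ) satisfying α ≥ σ(α) ≥ 1 and α ≤ M, over all square-free N, is at most 8M(M+1)(2M−1)². -/
/-- x is a real quadratic d-number a + b√N (N ≥ 2 square-free, a, b
half-integers) with x ≥ σ(x) ≥ 1, where σ(x) = a − b√N is the Galois
conjugate. -/
def IsGalMaxQuadDNumber (x : ℝ) : Prop :=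
  ∃ (N : ℕ) (a b : ℚ), 2 ≤ N ∧ Squarefree N ∧
    (∃ z : ℤ, a = z / 2) ∧ (∃ z : ℤ, b = z / 2) ∧
    x = (a : ℝ) + (b : ℝ) * Real.sqrt N ∧ IsIntegral ℤ x ∧
    IsIntegral ℤ (x / ((a : ℝ) - (b : ℝ) * Real.sqrt N)) ∧
    1 ≤ (a : ℝ) - (b : ℝ) * Real.sqrt N ∧ (a : ℝ) - (b : ℝ) * Real.sqrt N ≤ x

/-- The number of real quadratic d-numbers α with α ≥ σ(α) ≥ 1 and α ≤ M is at
most 8M(M+1)(2M−1)². -/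
theorem stmt_16 (M : ℕ) (hM : 1 ≤ M) :
    {x : ℝ | IsGalMaxQuadDNumber x ∧ x ≤ M}.Finite ∧
    {x : ℝ | IsGalMaxQuadDNumber x ∧ x ≤ M}.ncard ≤
      8 * M * (M + 1) * (2 * M - 1) ^ 2 := by
  set f : ℤ × ℤ → ℝ := fun p => ((p.1 : ℝ) + Real.sqrt ((p.1 : ℝ) ^ 2 - p.2)) / 2 with hf
  set T : Finset (ℤ × ℤ) := Finset.Icc 2 (2 * (M : ℤ)) ×ˢ Finset.Icc 4 (4 * (M : ℤ) ^ 2)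
    with hT
  have hsub : {x : ℝ | IsGalMaxQuadDNumber x ∧ x ≤ M} ⊆ f '' (T : Set (ℤ × ℤ)) := by
    rintro x ⟨⟨N, a, b, hN, -, ⟨z, hz⟩, ⟨w, hw⟩, hx, -, -, hσ1, hσx⟩, hxM⟩
    set r := Real.sqrt N with hrdef
    have hN0 : (0 : ℝ) < (N : ℝ) := by
      have : (0 : ℕ) < N := by omega
      exact_mod_cast this
    have hr0 : 0 < r := Real.sqrt_pos.mpr hN0
    have hr2 : r ^ 2 = (N : ℝ) := Real.sq_sqrt hN0.le
    have hz' : (a : ℝ) = (z : ℝ) / 2 := by exact_mod_cast congrArg (Rat.cast (K := ℝ)) hz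
    have hw' : (b : ℝ) = (w : ℝ) / 2 := by exact_mod_cast congrArg (Rat.cast (K := ℝ)) hw
    rw [hx] at hσx hxM
    -- b ≥ 0
    have hB0 : (0 : ℝ) ≤ (b : ℝ) := by
      by_contra h
      push_neg at h
      nlinarith
    have hw0 : (0 : ℝ) ≤ (w : ℝ) := by rw [hw'] at hB0; linarith
    have hMR : (1 : ℝ) ≤ (M : ℝ) := by exact_mod_cast hM
    have hzlo : (2 : ℝ) ≤ (z : ℝ) := by nlinarith
    have hzhi : (z : ℝ) ≤ 2 * (M : ℝ) := by nlinarith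
    have hs1 : (1 : ℝ) ≤ (a : ℝ) - (b : ℝ) * r := hσ1
    have hxpos : (1 : ℝ) ≤ (a : ℝ) + (b : ℝ) * r := le_trans hσ1 hσx
    have hmval : ((z ^ 2 - w ^ 2 * (N : ℤ) : ℤ) : ℝ) =
        4 * (((a : ℝ) + (b : ℝ) * r) * ((a : ℝ) - (b : ℝ) * r)) := by
      push_cast
      rw [hz', hw', ← hr2]
      ring
    have hmlo : (4 : ℝ) ≤ ((z ^ 2 - w ^ 2 * (N : ℤ) : ℤ) : ℝ) := by
      rw [hmval]; nlinarith
    have hmhi : ((z ^ 2 - w ^ 2 * (N : ℤ) : ℤ) : ℝ) ≤ 4 * (M : ℝ) ^ 2 := by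
      rw [hmval]; nlinarith
    refine ⟨(z, z ^ 2 - w ^ 2 * (N : ℤ)), ?_, ?_⟩
    · simp only [hT, Finset.coe_product, Set.mem_prod, Finset.mem_coe, Finset.mem_Icc]
      constructor
      · constructor
        · exact_mod_cast hzlo
        · exact_mod_cast hzhi
      · constructor
        · exact_mod_cast hmlo
        · exact_mod_cast hmhi
    · simp only [hf]
      have harg : (z : ℝ) ^ 2 - ((z ^ 2 - w ^ 2 * (N : ℤ) : ℤ) : ℝ) = ((w : ℝ) * r) ^ 2 := by
        push_cast
        rw [← hr2]
        ring
      rw [harg, Real.sqrt_sq (by positivity)]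
      rw [hx, hz', hw']
      ring
  have hTfin : (T : Set (ℤ × ℤ)).Finite := T.finite_toSet
  have hfin : {x : ℝ | IsGalMaxQuadDNumber x ∧ x ≤ M}.Finite := (hTfin.image f).subset hsub
  refine ⟨hfin, ?_⟩
  have hcard : T.card = (2 * M + 1 - 2 : ℤ).toNat * (4 * M ^ 2 + 1 - 4 : ℤ).toNat := by
    rw [hT, Finset.card_product, Int.card_Icc, Int.card_Icc]
  calc {x : ℝ | IsGalMaxQuadDNumber x ∧ x ≤ M}.ncard
      ≤ (f '' (T : Set (ℤ × ℤ))).ncard := Set.ncard_le_ncard hsub (hTfin.image f)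
    _ ≤ (T : Set (ℤ × ℤ)).ncard := Set.ncard_image_le hTfin
    _ = T.card := Set.ncard_coe_finset T
    _ ≤ 8 * M * (M + 1) * (2 * M - 1) ^ 2 := by
        rw [hcard]
        have hK : 1 ≤ M ^ 2 := Nat.one_le_pow _ _ (by omega)
        have e1 : (2 * (M : ℤ) + 1 - 2).toNat = 2 * M - 1 := by omega
        have e2 : (4 * (M : ℤ) ^ 2 + 1 - 4).toNat = 4 * M ^ 2 - 3 := by
          have : ((M : ℤ)) ^ 2 = ((M ^ 2 : ℕ) : ℤ) := by push_cast; ring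
          omega
        rw [e1, e2]
        have h2 : 1 ≤ 2 * M := by omega
        have h3 : 3 ≤ 4 * M ^ 2 := by omega
        zify [h2, h3]
        have hM' : (1 : ℤ) ≤ (M : ℤ) := by exact_mod_cast hM
        nlinarith [hM', sq_nonneg ((M : ℤ) - 1), sq_nonneg (2 * (M : ℤ) - 1)]
end

section
/- Let N ≥ 2 be square-free with norm(ε_N) = −1, and suppose α is a d-number in ℚ(√N) with α ≥ σ(α) ≥ 1, written canonically as α = ℓ·ε_N^m·(√N)^δ with ℓ ∈ ℤ≥1, m ∈ ℤ≥0, δ ∈ {0,1} (so m ≡ δ mod 2). Then ℓ ≥ ε_N^m·(√N)^{−δ}, and consequently α ≥ ε_N^{2m}. -/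
/-- If the fundamental unit ε_N = (t + u√N)/2 of ℚ(√N) has norm −1 and
α = ℓ·ε_N^m·(√N)^δ (ℓ ≥ 1, m ≥ 0, δ ∈ {0,1}, m ≡ δ mod 2) satisfies
α ≥ σ(α) ≥ 1, then ℓ ≥ ε_N^m·(√N)^{−δ} and α ≥ ε_N^{2m}. -/
theorem stmt_18 (N : ℕ) (hN : 2 ≤ N) (hsf : Squarefree N) (t u : ℤ)
    (ht : 0 < t) (hu : 0 < u)
    (hnorm : t ^ 2 - (N : ℤ) * u ^ 2 = -4)
    (ε : ℝ) (hε : ε = ((t : ℝ) + (u : ℝ) * Real.sqrt N) / 2)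
    (hε1 : 1 < ε) (hεint : IsIntegral ℤ ε)
    (hmin : ∀ x : ℝ, IsIntegral ℤ x → IsIntegral ℤ x⁻¹ →
      (∃ a b : ℚ, x = (a : ℝ) + (b : ℝ) * Real.sqrt N) → 1 < x → ε ≤ x)
    (ℓ : ℤ) (hℓ : 1 ≤ ℓ) (m δ : ℕ) (hδ : δ = 0 ∨ δ = 1)
    (hparity : m % 2 = δ % 2)
    (α : ℝ) (hα : α = (ℓ : ℝ) * ε ^ m * Real.sqrt N ^ δ)
    (σα : ℝ) (hσα : σα = (ℓ : ℝ) * (((t : ℝ) - (u : ℝ) * Real.sqrt N) / 2) ^ m *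
      (-Real.sqrt N) ^ δ)
    (h1 : 1 ≤ σα) (h2 : σα ≤ α) :
    ε ^ m * (Real.sqrt N ^ δ)⁻¹ ≤ (ℓ : ℝ) ∧ ε ^ (2 * m) ≤ α := by

  have hN0 : (0:ℝ) ≤ (N:ℝ) := by positivity
  have hs2 : Real.sqrt N ^ 2 = (N:ℝ) := Real.sq_sqrt hN0
  have hspos : (0:ℝ) < Real.sqrt N := Real.sqrt_pos.mpr (by exact_mod_cast lt_of_lt_of_le two_pos hN)
  have hεpos : (0:ℝ) < ε := lt_trans one_pos hε1
  have hnormR : (t:ℝ) ^ 2 - (N:ℝ) * (u:ℝ) ^ 2 = -4 := by exact_mod_cast congrArg (Int.cast : ℤ → ℝ) hnorm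
  have hprod : ε * (((t:ℝ) - (u:ℝ) * Real.sqrt N) / 2) = -1 := by
    rw [hε]; nlinarith [hs2]
  have σinv : ((t:ℝ) - (u:ℝ) * Real.sqrt N) / 2 = -ε⁻¹ := by
    field_simp
    linarith [hprod]
  have heven : Even (m + δ) := by
    rw [Nat.even_add, Nat.even_iff, Nat.even_iff, hparity]
  have key : ((-1:ℝ))^m * ((-1:ℝ))^δ = 1 := by
    rw [← pow_add]; exact Even.neg_one_pow heven
  have hσα' : σα = (ℓ:ℝ) * (ε^m)⁻¹ * Real.sqrt N ^ δ := by
    rw [hσα, σinv, neg_pow, neg_pow, inv_pow]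
    linear_combination ((ℓ:ℝ) * (ε^m)⁻¹ * Real.sqrt N ^ δ) * key
  have hεm : (0:ℝ) < ε ^ m := pow_pos hεpos m
  have hsδ : (0:ℝ) < Real.sqrt N ^ δ := pow_pos hspos δ
  have hic : (ε^m)⁻¹ * ε^m = 1 := inv_mul_cancel₀ hεm.ne'
  rw [hσα'] at h1
  have key2 : ε ^ m ≤ (ℓ:ℝ) * Real.sqrt N ^ δ := by
    nlinarith [mul_le_mul_of_nonneg_right h1 hεm.le]
  have c1 : ε ^ m * (Real.sqrt N ^ δ)⁻¹ ≤ (ℓ:ℝ) := by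
    rw [← div_eq_mul_inv, div_le_iff₀ hsδ]; exact key2
  refine ⟨c1, ?_⟩
  rw [hα, two_mul, pow_add]
  calc ε^m * ε^m = (ε^m * (Real.sqrt N ^ δ)⁻¹) * ε^m * Real.sqrt N ^ δ := by
        field_simp
    _ ≤ (ℓ:ℝ) * ε^m * Real.sqrt N ^ δ := by gcongr
end

section
/- Let N ≥ 2 be square-free with norm(ε_N) = −1, let M ≥ 1 be real, and suppose there exists a d-number α in ℚ(√N) with α ≥ σ(α) ≥ 1 and α ≤ M. Then N + 2√N ≤ 4M − 1. -/
open Polynomial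

lemma aux_quad (x : ℝ) (hxirr : Irrational x) (hint : IsIntegral ℤ x) (c : ℚ)
    (hroot : x ^ 2 - (c : ℝ) * x + 1 = 0) : IsIntegral ℤ x⁻¹ := by
  have hx0 : x ≠ 0 := hxirr.ne_zero
  set P : ℚ[X] := X ^ 2 - C c * X + 1 with hP
  have hPmonic : P.Monic := by unfold P; monicity!
  have hPx : Polynomial.aeval x P = 0 := by
    simp [hP]
    linear_combination hroot
  have hdvd : minpoly ℚ x ∣ P := minpoly.dvd ℚ x hPx
  have hintQ : IsIntegral ℚ x := hint.tower_top
  have hP0 : P ≠ 0 := hPmonic.ne_zero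
  have hdegP : P.natDegree = 2 := by unfold P; compute_degree!
  have hdeg2 : (minpoly ℚ x).natDegree = 2 := by
    have hle : (minpoly ℚ x).natDegree ≤ 2 := hdegP ▸ Polynomial.natDegree_le_of_dvd hdvd hP0
    have hge : 2 ≤ (minpoly ℚ x).natDegree := by
      rw [minpoly.two_le_natDegree_iff hintQ]
      rintro ⟨q, hq⟩
      exact hxirr ⟨q, by simpa using hq⟩
    omega
  have heq : minpoly ℚ x = P := by
    obtain ⟨k, hk⟩ := hdvd
    have hm : (minpoly ℚ x).Monic := minpoly.monic hintQ
    have hk0 : k ≠ 0 := by rintro rfl; simp at hk; exact hP0 hk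
    have hdk : k.natDegree = 0 := by
      have := Polynomial.natDegree_mul hm.ne_zero hk0
      rw [← hk, hdegP, hdeg2] at this
      omega
    have hkC : k = C (k.coeff 0) := Polynomial.eq_C_of_natDegree_eq_zero hdk
    have hlc : k.coeff 0 = 1 := by
      have := congrArg Polynomial.leadingCoeff hk
      rw [Polynomial.leadingCoeff_mul, hm.leadingCoeff, hPmonic.leadingCoeff, one_mul] at this
      simp only [Polynomial.leadingCoeff, hdk] at this
      exact this.symm
    rw [hk, hkC, hlc, map_one, mul_one]
  have hmap : minpoly ℚ x = (minpoly ℤ x).map (algebraMap ℤ ℚ) :=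
    minpoly.isIntegrallyClosed_eq_field_fractions' ℚ hint
  have hc : ((-(minpoly ℤ x).coeff 1 : ℤ) : ℚ) = c := by
    have h1 : P.coeff 1 = -c := by
      simp [hP, Polynomial.coeff_one]
    have h2 : ((minpoly ℤ x).map (algebraMap ℤ ℚ)).coeff 1 = ((minpoly ℤ x).coeff 1 : ℚ) := by
      simp
    rw [← heq, hmap, h2] at h1
    push_cast
    linarith [h1]
  set z : ℤ := -(minpoly ℤ x).coeff 1 with hz
  refine ⟨X ^ 2 - C z * X + 1, by monicity!, ?_⟩
  have hcz : (c : ℝ) = (z : ℝ) := by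
    rw [← hc]; push_cast; ring
  simp only [eval₂_add, eval₂_sub, eval₂_pow, eval₂_mul, eval₂_X, eval₂_C, eval₂_one]
  have hzz : (algebraMap ℤ ℝ) z = (z : ℝ) := by simp
  rw [hzz, ← hcz]
  have h2 : (x⁻¹ ^ 2 - (c : ℝ) * x⁻¹ + 1) * x ^ 2 = x ^ 2 - (c : ℝ) * x + 1 := by
    field_simp; ring
  rw [hroot] at h2
  rcases mul_eq_zero.mp h2 with h | h
  · linear_combination h
  · exact absurd h (pow_ne_zero 2 hx0)

set_option maxHeartbeats 1000000 in
/-- If ℚ(√N) has a (fundamental) unit ε_N = (t + u√N)/2 of norm −1, M ≥ 1, and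
there exists an (irrational) d-number α = a + b√N in ℚ(√N) with
α ≥ σ(α) ≥ 1 and α ≤ M, then N + 2√N ≤ 4M − 1. -/
theorem stmt_19 (N : ℕ) (hN : 2 ≤ N) (hsf : Squarefree N) (t u : ℤ)
    (ht : 0 < t) (hu : 0 < u)
    (hnorm : t ^ 2 - (N : ℤ) * u ^ 2 = -4)
    (hεint : IsIntegral ℤ (((t : ℝ) + (u : ℝ) * Real.sqrt N) / 2))
    (hε1 : 1 < ((t : ℝ) + (u : ℝ) * Real.sqrt N) / 2)
    (hmin : ∀ x : ℝ, IsIntegral ℤ x → IsIntegral ℤ x⁻¹ →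
      (∃ a b : ℚ, x = (a : ℝ) + (b : ℝ) * Real.sqrt N) → 1 < x →
      ((t : ℝ) + (u : ℝ) * Real.sqrt N) / 2 ≤ x)
    (M : ℝ) (hM : 1 ≤ M)
    (h : ∃ a b : ℚ, (∃ z : ℤ, a = z / 2) ∧ (∃ z : ℤ, b = z / 2) ∧
      IsIntegral ℤ ((a : ℝ) + (b : ℝ) * Real.sqrt N) ∧
      IsIntegral ℤ (((a : ℝ) + (b : ℝ) * Real.sqrt N) /
        ((a : ℝ) - (b : ℝ) * Real.sqrt N)) ∧
      Irrational ((a : ℝ) + (b : ℝ) * Real.sqrt N) ∧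
      1 ≤ (a : ℝ) - (b : ℝ) * Real.sqrt N ∧
      (a : ℝ) - (b : ℝ) * Real.sqrt N ≤ (a : ℝ) + (b : ℝ) * Real.sqrt N ∧
      (a : ℝ) + (b : ℝ) * Real.sqrt N ≤ M) :
    (N : ℝ) + 2 * Real.sqrt N ≤ 4 * M - 1 := by
  obtain ⟨a, b, -, -, hαint, hxint, hαirr, hσ1, hσle, hαM⟩ := h
  set r : ℝ := Real.sqrt N with hr
  have hNpos : (0:ℝ) < N := by positivity
  have hrpos : 0 < r := Real.sqrt_pos.mpr hNpos
  have hr2 : r ^ 2 = (N:ℝ) := Real.sq_sqrt (le_of_lt hNpos)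
  have hrirr : Irrational r := by
    rw [hr, irrational_sqrt_natCast_iff]
    rintro ⟨k, hk⟩
    have hkd : k ∣ N := ⟨k, hk⟩
    have h1 := hsf k (hk ▸ dvd_refl _)
    rw [Nat.isUnit_iff] at h1
    rw [h1] at hk
    omega
  set α : ℝ := (a:ℝ) + b * r with hα
  set β : ℝ := (a:ℝ) - b * r with hβ
  have hb0 : (b:ℝ) ≠ 0 := by
    intro hb
    exact hαirr ⟨a, by rw [hα, hb]; ring⟩
  have hbpos : 0 < (b:ℝ) := by
    rcases lt_or_gt_of_ne hb0 with hlt | hgt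
    · exfalso; nlinarith [hσle]
    · exact hgt
  have hβpos : 0 < β := lt_of_lt_of_le one_pos hσ1
  have hαβ : β < α := by rw [hα, hβ]; nlinarith
  have hαpos : 0 < α := lt_trans hβpos hαβ
  have hα1 : 1 < α := lt_of_le_of_lt hσ1 hαβ
  set x : ℝ := α / β with hx
  have hβne : β ≠ 0 := ne_of_gt hβpos
  have hx1 : 1 < x := (one_lt_div hβpos).mpr hαβ
  have hqval : α * β = (a:ℝ)^2 - (b:ℝ)^2 * N := by
    rw [hα, hβ]; linear_combination (-(b:ℝ)^2) * hr2
  set q : ℚ := a^2 - b^2 * N with hqdef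
  have hqcast : (q:ℝ) = α * β := by rw [hqval, hqdef]; push_cast; ring
  have hq0 : q ≠ 0 := by
    intro h0
    rw [h0] at hqcast
    exact (ne_of_gt (mul_pos hαpos hβpos)) (by simpa using hqcast.symm)
  have hqR : (q:ℝ) ≠ 0 := by exact_mod_cast hq0
  have hxirr : Irrational x := by
    rintro ⟨c, hc⟩
    have hc1 : (1:ℝ) < (c:ℝ) := hc ▸ hx1
    have hc1' : (1:ℚ) < c := by exact_mod_cast hc1
    have hcβ : (c:ℝ) * β = α := by rw [hc, hx, div_mul_cancel₀ _ hβne]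
    have hbq : b ≠ 0 := by exact_mod_cast hb0
    have hden : (b:ℚ) * (c + 1) ≠ 0 := mul_ne_zero hbq (by linarith)
    have hdenR : (b:ℝ) * ((c:ℝ) + 1) ≠ 0 := by exact_mod_cast hden
    refine hrirr ⟨a * (c - 1) / (b * (c + 1)), ?_⟩
    push_cast
    rw [div_eq_iff hdenR]
    rw [hα, hβ] at hcβ
    linear_combination hcβ
  set sx : ℚ := 2 * (a^2 + b^2 * N) / q with hsxdef
  have hsum : α^2 + β^2 = 2*((a:ℝ)^2 + (b:ℝ)^2 * N) := by
    rw [hα, hβ]; linear_combination (2*(b:ℝ)^2) * hr2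
  have hsxR : (sx:ℝ) = (α^2 + β^2) / (α * β) := by
    have h1 : (sx:ℝ) * (q:ℝ) = 2*((a:ℝ)^2 + (b:ℝ)^2*(N:ℝ)) := by
      rw [hsxdef]
      push_cast
      field_simp
    rw [eq_div_iff (ne_of_gt (mul_pos hαpos hβpos)), ← hqcast, h1, hsum]
  have hroot : x^2 - (sx:ℝ)*x + 1 = 0 := by
    rw [hx, hsxR]
    field_simp
    ring
  have hxinv : IsIntegral ℤ x⁻¹ := aux_quad x hxirr hxint sx hroot
  have hd : ((a:ℝ)^2 - (b:ℝ)^2*(N:ℝ)) ≠ 0 := by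
    rw [← hqval]; exact ne_of_gt (mul_pos hαpos hβpos)
  have hqR2 : (q:ℝ) = (a:ℝ)^2 - (b:ℝ)^2*(N:ℝ) := by rw [hqdef]; push_cast; ring
  have hxform : ∃ A B : ℚ, x = (A:ℝ) + (B:ℝ) * r := by
    have hid : ((a:ℝ)^2 + (b:ℝ)^2*(N:ℝ) + 2*(a:ℝ)*(b:ℝ)*r) * β = ((a:ℝ)^2 - (b:ℝ)^2*(N:ℝ)) * α := by
      rw [hα, hβ]; linear_combination (-2*(a:ℝ)*(b:ℝ)^2) * hr2
    refine ⟨(a^2+b^2*N)/q, 2*a*b/q, ?_⟩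
    rw [hx]
    push_cast
    rw [hqR2, div_mul_eq_mul_div, ← add_div, div_eq_div_iff hβne hd]
    linear_combination - hid
  have hεx := hmin x hxint hxinv hxform hx1
  set ε : ℝ := ((t:ℝ) + (u:ℝ) * r) / 2 with hε
  have hεpos : 0 < ε := lt_trans one_pos hε1
  have hεne : ε ≠ 0 := ne_of_gt hεpos
  have hnormR : (t:ℝ)^2 - (N:ℝ)*(u:ℝ)^2 = -4 := by exact_mod_cast hnorm
  have hεinv : ε * (ε - (t:ℝ)) = 1 := by
    rw [hε]; linear_combination ((u:ℝ)^2/4) * hr2 - (1/4) * hnormR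
  have hεinv' : ε⁻¹ = ε - (t:ℝ) := inv_eq_of_mul_eq_one_right hεinv
  have htint : IsIntegral ℤ ((t:ℝ)) := by
    have : (algebraMap ℤ ℝ) t = (t:ℝ) := by simp
    exact this ▸ isIntegral_algebraMap
  have hεinvint : IsIntegral ℤ ε⁻¹ := by rw [hεinv']; exact hεint.sub htint
  have hne : x ≠ ε := by
    intro hxe
    have hε2 : x^2 - (t:ℝ)*x - 1 = 0 := by
      rw [hxe]; linear_combination hεinv
    have hlin : ((t:ℝ) - (sx:ℝ)) * x = -2 := by linear_combination hroot - hε2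
    by_cases hst : (t:ℚ) - sx = 0
    · have : ((t:ℝ) - (sx:ℝ)) = 0 := by exact_mod_cast hst
      rw [this, zero_mul] at hlin; norm_num at hlin
    · have hstR : ((t:ℝ) - (sx:ℝ)) ≠ 0 := by
        intro h0; exact hst (by exact_mod_cast h0)
      exact hxirr ⟨-2/((t:ℚ) - sx), by push_cast; rw [eq_comm, eq_div_iff hstR]; linarith [hlin]⟩
  have hεlt : ε < x := lt_of_le_of_ne hεx (fun hh => hne hh.symm)
  set y : ℝ := x * ε⁻¹ with hy
  have hy1 : 1 < y := by
    rw [hy, ← div_eq_mul_inv]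
    exact (one_lt_div hεpos).mpr hεlt
  have hyint : IsIntegral ℤ y := hxint.mul hεinvint
  have hyinvint : IsIntegral ℤ y⁻¹ := by
    rw [hy, mul_inv, inv_inv]; exact hxinv.mul hεint
  have hyform : ∃ A B : ℚ, y = (A:ℝ) + (B:ℝ) * r := by
    obtain ⟨A, B, hAB⟩ := hxform
    refine ⟨(-A*t + B*u*N)/2, (A*u - B*t)/2, ?_⟩
    rw [hy, hεinv', hAB, hε]
    push_cast
    linear_combination ((B:ℝ)*(u:ℝ)/2) * hr2
  have hεy := hmin y hyint hyinvint hyform hy1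
  have hε2x : ε * ε ≤ x := by
    have h2 := mul_le_mul_of_nonneg_right hεy (le_of_lt hεpos)
    rwa [hy, mul_assoc, inv_mul_cancel₀ hεne, mul_one] at h2
  have hxα : x ≤ α := by
    rw [hx]; exact div_le_self (le_of_lt hαpos) hσ1
  have hMε : ε * ε ≤ M := le_trans hε2x (le_trans hxα hαM)
  have ht1 : (1:ℝ) ≤ (t:ℝ) := by exact_mod_cast ht
  have hu1 : (1:ℝ) ≤ (u:ℝ) := by exact_mod_cast hu
  have hεlb : (1 + r)/2 ≤ ε := by
    rw [hε]
    have h5 : (1:ℝ)*r ≤ (u:ℝ)*r := mul_le_mul_of_nonneg_right hu1 hrpos.le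
    linarith
  have h3 : ((1+r)/2)*((1+r)/2) ≤ ε*ε :=
    mul_le_mul hεlb hεlb (by positivity) hεpos.le
  have h4 : ((1+r)/2)*((1+r)/2) = (1 + 2*r + (N:ℝ))/4 := by linear_combination (1/4)*hr2
  linarith
end
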